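/- arXiv:2005.08201 — 4 statements merged into one kernel-verified Lean document; each statement's English description precedes it below -/
import Mathlib

section
/- Let F_q be a finite field of characteristic 2 with q = 2^n elements. Then the group V = 1 + J(F_q[QD_16]) has exponent 8; that is, y^8 = 1 for every y in V, and 8 is the least such positive integer. -/
/-- Relations for the quasidihedral group `QD_{2^k}`:
`a^(2^(k-1)) = 1`, `x^2 = 1`, `x * a * x = a^(2^(k-2)-1)`. -/
def qdRels (k : ℕ) : Set (FreeGroup (Fin 2)) :=
  {FreeGroup.of 0 ^ (2 ^ (k - 1)), FreeGroup.of 1 ^ 2,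
    FreeGroup.of 1 * FreeGroup.of 0 * FreeGroup.of 1 * (FreeGroup.of 0 ^ (2 ^ (k - 2) - 1))⁻¹}

/-- The quasidihedral group of order 16: `⟨a, x | a^8 = x^2 = 1, x a x = a^3⟩`. -/
def QD16 : Type := PresentedGroup (qdRels 4)

instance : Group QD16 := inferInstanceAs (Group (PresentedGroup (qdRels 4)))

namespace QDaux

def aG : QD16 := PresentedGroup.of 0
def xG : QD16 := PresentedGroup.of 1

lemma rel_one {r : FreeGroup (Fin 2)} (hr : r ∈ qdRels 4) :
    PresentedGroup.mk (qdRels 4) r = 1 :=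
  (QuotientGroup.eq_one_iff r).mpr (Subgroup.subset_normalClosure hr)

lemma haG8 : aG ^ 8 = 1 := by
  have h := rel_one (r := FreeGroup.of 0 ^ (2 ^ (4 - 1))) (by left; rfl)
  simp [aG, PresentedGroup.of] at h
  exact h

lemma hxG2 : xG ^ 2 = 1 := by
  have h := rel_one (r := FreeGroup.of 1 ^ 2) (by right; left; rfl)
  simp [xG, PresentedGroup.of] at h
  exact h

lemma hrel : xG * aG * xG * (aG ^ 3)⁻¹ = 1 := by
  have h := rel_one (r := FreeGroup.of 1 * FreeGroup.of 0 * FreeGroup.of 1 *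
      (FreeGroup.of 0 ^ (2 ^ (4 - 2) - 1))⁻¹) (by right; right; rfl)
  simp [aG, xG, PresentedGroup.of] at h
  exact h

lemma hxinv : xG⁻¹ = xG :=
  inv_eq_of_mul_eq_one_right (by rw [← pow_two]; exact hxG2)

lemma hxa : xG * aG = aG ^ 3 * xG := by
  have h : xG * aG * xG = aG ^ 3 := by
    have := hrel
    rwa [mul_inv_eq_one] at this
  calc xG * aG = xG * aG * xG * xG⁻¹ := by group
    _ = aG ^ 3 * xG := by rw [h, hxinv]

lemma aG_pow_mod (i : ℕ) : aG ^ i = aG ^ (i % 8) := by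
  conv_lhs => rw [← Nat.div_add_mod i 8]
  rw [pow_add, pow_mul, haG8, one_pow, one_mul]

lemma swap (k : ℕ) : xG * aG ^ k = aG ^ (3 * k) * xG := by
  induction k with
  | zero => simp
  | succ k ih =>
      rw [pow_succ, ← mul_assoc, ih, mul_assoc, hxa, Nat.mul_succ, pow_add, mul_assoc]

lemma swap_pow (j : ℕ) : ∀ k, xG ^ j * aG ^ k = aG ^ (3 ^ j * k) * xG ^ j := by
  induction j with
  | zero => simp
  | succ j ih =>
      intro k
      rw [pow_succ, mul_assoc, swap, ← mul_assoc, ih (3 * k),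
        show 3 ^ j * (3 * k) = 3 ^ (j + 1) * k by ring, mul_assoc]

lemma normal_form (g : QD16) : ∃ i j : ℕ, g = aG ^ i * xG ^ j := by
  let H : Subgroup QD16 :=
    { carrier := {g | ∃ i j : ℕ, g = aG ^ i * xG ^ j}
      one_mem' := ⟨0, 0, by simp⟩
      mul_mem' := by
        rintro u v ⟨i, j, rfl⟩ ⟨k, l, rfl⟩
        refine ⟨i + 3 ^ j * k, j + l, ?_⟩
        rw [pow_add, pow_add]
        calc aG ^ i * xG ^ j * (aG ^ k * xG ^ l)
            = aG ^ i * (xG ^ j * aG ^ k) * xG ^ l := by group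
          _ = aG ^ i * (aG ^ (3 ^ j * k) * xG ^ j) * xG ^ l := by rw [swap_pow]
          _ = aG ^ i * aG ^ (3 ^ j * k) * (xG ^ j * xG ^ l) := by group
      inv_mem' := by
        rintro u ⟨i, j, rfl⟩
        refine ⟨3 ^ j * (7 * i), j, ?_⟩
        have hxj : (xG ^ j)⁻¹ = xG ^ j := by
          apply inv_eq_of_mul_eq_one_right
          rw [← pow_add, ← two_mul, pow_mul, hxG2, one_pow]
        have hai : (aG ^ i)⁻¹ = aG ^ (7 * i) := by
          apply inv_eq_of_mul_eq_one_right
          rw [← pow_add]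
          have : i + 7 * i = 8 * i := by ring
          rw [this, pow_mul, haG8, one_pow]
        rw [mul_inv_rev, hxj, hai, swap_pow] }
  have : g ∈ H := by
    apply PresentedGroup.generated_by
    intro j
    fin_cases j
    · exact ⟨1, 0, by rw [pow_zero, mul_one, pow_one]; rfl⟩
    · exact ⟨0, 1, by rw [pow_zero, one_mul, pow_one]; rfl⟩
  exact this

-- permutation model
def aP : Equiv.Perm (ZMod 8) := Equiv.addLeft 1
def xP : Equiv.Perm (ZMod 8) :=
  ⟨fun t => 3 * t, fun t => 3 * t, fun t => by revert t; decide, fun t => by revert t; decide⟩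

def fP : Fin 2 → Equiv.Perm (ZMod 8) := ![aP, xP]

lemma fP_rels : ∀ r ∈ qdRels 4, FreeGroup.lift fP r = 1 := by
  intro r hr
  rcases hr with h | h | h <;> subst h <;>
    simp only [map_mul, map_pow, map_inv, FreeGroup.lift_apply_of] <;> decide

def φ : QD16 →* Equiv.Perm (ZMod 8) :=
  PresentedGroup.toGroup fP_rels

lemma aG4_ne_one : aG ^ 4 ≠ 1 := by
  intro h
  have : φ (aG ^ 4) = 1 := by rw [h, map_one]
  rw [map_pow] at this
  have ha : φ aG = aP := by
    show PresentedGroup.toGroup fP_rels (PresentedGroup.of 0) = aP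
    rw [PresentedGroup.toGroup.of]
    rfl
  rw [ha] at this
  exact absurd this (by decide)

end QDaux

open Polynomial

namespace QDcalc
set_option linter.unusedSectionVars false

variable {F : Type} [Field F] [CharP F 2]
variable {S : Type} [Ring S] [Algebra F S]

noncomputable def sg (p : F[X]) : F[X] := p.comp (X ^ 3)

lemma sg_add (p q : F[X]) : sg (p + q) = sg p + sg q := add_comp
lemma sg_mul (p q : F[X]) : sg (p * q) = sg p * sg q := mul_comp ..
lemma sg_pow (p : F[X]) (n : ℕ) : sg (p ^ n) = sg p ^ n := pow_comp ..

lemma two_z {F S : Type} [Field F] [CharP F 2] [Ring S] [Algebra F S] (z : S) :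
    z + z = 0 := by
  have h2 : (2 : F) = 0 := by exact_mod_cast CharP.cast_eq_zero F 2
  calc z + z = (2 : F) • z := by rw [two_smul]
    _ = 0 := by rw [h2, zero_smul]

variable (B Y : S)

section withB
variable (hB : B ^ 8 = 1)
include hB

lemma B_pow_mod (i : ℕ) : B ^ i = B ^ (i % 8) := by
  conv_lhs => rw [← Nat.div_add_mod i 8, pow_add, pow_mul, hB, one_pow, one_mul]

lemma aeval_comp_X_pow (m : ℕ) (p : F[X]) :
    aeval B (p.comp ((X : F[X]) ^ m)) = aeval (B ^ m) p := by
  induction p using Polynomial.induction_on' with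
  | add p q hp hq => rw [add_comp, map_add, hp, hq, map_add]
  | monomial n c =>
      rw [← C_mul_X_pow_eq_monomial, mul_comp, C_comp, X_pow_comp, map_mul, aeval_C,
        map_pow, aeval_X_pow, map_mul, aeval_C, aeval_X_pow, ← pow_mul]

lemma aeval_sg_sg (p : F[X]) : aeval B (sg (sg p)) = aeval B p := by
  have h1 : sg (sg p) = p.comp ((X : F[X]) ^ 9) := by
    rw [sg, sg, comp_assoc, X_pow_comp, ← pow_mul]
  rw [h1, aeval_comp_X_pow B hB, show B ^ 9 = B ^ 1 by
    rw [B_pow_mod B hB 9, B_pow_mod B hB 1], pow_one]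

lemma aeval_sg_pow4 (p : F[X]) : aeval B (sg (p ^ 4)) = aeval B (p ^ 4) := by
  haveI : Fact (Nat.Prime 2) := ⟨Nat.prime_two⟩
  induction p using Polynomial.induction_on' with
  | add p q hp hq =>
      have h4 : (p + q) ^ 4 = p ^ 4 + q ^ 4 := by
        have := add_pow_char_pow (R := F[X]) (p := 2) (n := 2) p q
        norm_num at this
        exact this
      rw [h4, sg_add, map_add, hp, hq, map_add]
  | monomial n c =>
      have hsg : sg ((monomial n c : F[X]) ^ 4) = C (c ^ 4) * X ^ (3 * (n * 4)) := by
        rw [monomial_pow, ← C_mul_X_pow_eq_monomial, sg, mul_comp, C_comp, X_pow_comp,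
          ← pow_mul]
      rw [hsg, monomial_pow, ← C_mul_X_pow_eq_monomial, map_mul, map_mul, aeval_C,
        aeval_X_pow, aeval_X_pow]
      congr 1
      rw [B_pow_mod B hB (3 * (n * 4)), B_pow_mod B hB (n * 4)]
      congr 1
      omega

lemma aeval_pow8 (p : F[X]) : aeval B (p ^ 8) = ((p.eval 1) ^ 8) • (1 : S) := by
  haveI : Fact (Nat.Prime 2) := ⟨Nat.prime_two⟩
  induction p using Polynomial.induction_on' with
  | add p q hp hq =>
      have h8 : (p + q) ^ 8 = p ^ 8 + q ^ 8 := by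
        have := add_pow_char_pow (R := F[X]) (p := 2) (n := 3) p q
        norm_num at this
        exact this
      have h8' : (p.eval 1 + q.eval 1) ^ 8 = (p.eval 1) ^ 8 + (q.eval 1) ^ 8 := by
        have := add_pow_char_pow (R := F) (p := 2) (n := 3) (p.eval 1) (q.eval 1)
        norm_num at this
        exact this
      rw [h8, map_add, hp, hq, eval_add, h8', add_smul]
  | monomial n c =>
      rw [monomial_pow, ← C_mul_X_pow_eq_monomial, map_mul, aeval_C, aeval_X_pow,
        show n * 8 = 8 * n by ring, pow_mul, hB, one_pow, mul_one, eval_monomial,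
        one_pow, Algebra.smul_def, mul_one]
      norm_num

lemma cancel_sg (u : F[X]) : aeval B (u * sg u + sg (u * sg u)) = 0 := by
  rw [map_add, sg_mul, map_mul, map_mul, aeval_sg_sg B hB, ← map_mul, ← map_mul,
    mul_comm (sg u) u, two_z (F := F)]

lemma h4sg (r : F[X]) : aeval B (r ^ 4 + sg (r ^ 4)) = 0 := by
  rw [map_add, aeval_sg_pow4 B hB, two_z (F := F)]

lemma cross (r : F[X]) :
    aeval B ((r + sg r) * (sg r + sg (sg r))) = aeval B (r ^ 2 + sg (r ^ 2)) := by
  have expand : (r + sg r) * (sg r + sg (sg r)) =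
      r * sg r + r * sg (sg r) + sg r * sg r + sg r * sg (sg r) := by ring
  have e2 : aeval B (r * sg (sg r)) = aeval B (r ^ 2) := by
    rw [map_mul, aeval_sg_sg B hB, ← map_mul, ← pow_two]
  have e3 : (sg r) * (sg r) = sg (r ^ 2) := by rw [← pow_two, ← sg_pow]
  have e4 : aeval B (sg r * sg (sg r)) = aeval B (r * sg r) := by
    rw [map_mul, aeval_sg_sg B hB, ← map_mul, mul_comm]
  rw [expand, map_add, map_add, map_add, e2, e3, e4, map_add]
  calc aeval B (r * sg r) + aeval B (r ^ 2) + aeval B (sg (r ^ 2)) + aeval B (r * sg r)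
      = aeval B (r ^ 2) + aeval B (sg (r ^ 2)) +
        (aeval B (r * sg r) + aeval B (r * sg r)) := by abel
    _ = aeval B (r ^ 2) + aeval B (sg (r ^ 2)) := by rw [two_z (F := F), add_zero]

end withB

section full

lemma Y_pow_B (hYB : Y * B = B ^ 3 * Y) (k : ℕ) : Y * B ^ k = B ^ (3 * k) * Y := by
  induction k with
  | zero => simp
  | succ k ih =>
      rw [pow_succ, ← mul_assoc, ih, mul_assoc, hYB, ← mul_assoc, ← pow_add,
        show 3 * k + 3 = 3 * (k + 1) by ring]

lemma Y_aeval (hYB : Y * B = B ^ 3 * Y) (p : F[X]) : Y * aeval B p = aeval B (sg p) * Y := by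
  induction p using Polynomial.induction_on' with
  | add p q hp hq => rw [map_add, mul_add, hp, hq, sg_add, map_add, add_mul]
  | monomial n c =>
      rw [aeval_monomial, ← mul_assoc, (Algebra.commutes c Y).symm, mul_assoc,
        Y_pow_B B Y hYB, ← mul_assoc, ← C_mul_X_pow_eq_monomial, sg, mul_comp,
        C_comp, X_pow_comp, ← pow_mul, map_mul, aeval_C, aeval_X_pow]

lemma sq_f (hY : Y * Y = 1) (hYB : Y * B = B ^ 3 * Y) (p q : F[X]) :
    (aeval B p + aeval B q * Y) ^ 2 =
      aeval B (p ^ 2 + q * sg q) + aeval B (q * (p + sg p)) * Y := by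
  have expand : ∀ u v : S, (u + v * Y) * (u + v * Y) =
      u * u + u * v * Y + v * (Y * u) + v * ((Y * v) * Y) := by
    intro u v; noncomm_ring
  rw [pow_two, expand, Y_aeval B Y hYB p, Y_aeval B Y hYB q, mul_assoc _ Y Y, hY,
    mul_one, ← mul_assoc, ← map_mul, ← map_mul, ← map_mul, ← map_mul, ← pow_two]
  rw [show q * (p + sg p) = p * q + q * sg p from by ring, map_add, map_add, add_mul]
  abel
lemma key_pow8 (hB : B ^ 8 = 1) (hY : Y * Y = 1) (hYB : Y * B = B ^ 3 * Y) (p q : F[X]) :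
    (aeval B p + aeval B q * Y) ^ 8 = (((p + q).eval 1) ^ 8) • (1 : S) := by
  haveI : Fact (Nat.Prime 2) := ⟨Nat.prime_two⟩
  obtain ⟨p1, hp1⟩ : ∃ r : F[X], r = p ^ 2 + q * sg q := ⟨_, rfl⟩
  obtain ⟨q1, hq1⟩ : ∃ r : F[X], r = q * (p + sg p) := ⟨_, rfl⟩
  obtain ⟨p2, hp2⟩ : ∃ r : F[X], r = p1 ^ 2 + q1 * sg q1 := ⟨_, rfl⟩
  obtain ⟨q2, hq2⟩ : ∃ r : F[X], r = q1 * (p1 + sg p1) := ⟨_, rfl⟩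
  have hw8 : (aeval B p + aeval B q * Y) ^ 8 =
      aeval B (p2 ^ 2 + q2 * sg q2) + aeval B (q2 * (p2 + sg p2)) * Y := by
    rw [show (8 : ℕ) = 2 * 2 * 2 by norm_num, pow_mul, pow_mul, sq_f B Y hY hYB p q,
      ← hp1, ← hq1, sq_f B Y hY hYB p1 q1, ← hp2, ← hq2, sq_f B Y hY hYB p2 q2]
  have hp1sq : p1 ^ 2 = p ^ 4 + q ^ 2 * sg (q ^ 2) := by
    rw [hp1, add_pow_char, mul_pow, ← sg_pow, ← pow_mul]
    try norm_num
  have hmidp : aeval B (p1 ^ 2 + sg (p1 ^ 2)) = 0 := by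
    have hre : p1 ^ 2 + sg (p1 ^ 2) =
        (p ^ 4 + sg (p ^ 4)) + (q ^ 2 * sg (q ^ 2) + sg (q ^ 2 * sg (q ^ 2))) := by
      rw [hp1sq, sg_add]; try ring
    rw [hre, map_add, h4sg B hB p, cancel_sg B hB (q ^ 2), add_zero]
  have hmid : aeval B (p2 + sg p2) = 0 := by
    have hre : p2 + sg p2 =
        (p1 ^ 2 + sg (p1 ^ 2)) + (q1 * sg q1 + sg (q1 * sg q1)) := by
      rw [hp2, sg_add]; try ring
    rw [hre, map_add, hmidp, cancel_sg B hB q1, add_zero]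
  have hq3 : aeval B (q2 * (p2 + sg p2)) = 0 := by rw [map_mul, hmid, mul_zero]
  have hcross1 : aeval B ((p1 + sg p1) * (sg p1 + sg (sg p1))) = 0 :=
    (cross B hB p1).trans hmidp
  have hterm2 : aeval B (q2 * sg q2) = 0 := by
    have hfac : q2 * sg q2 =
        (q1 * sg q1) * ((p1 + sg p1) * (sg p1 + sg (sg p1))) := by
      rw [hq2, sg_mul, sg_add]; try ring
    rw [hfac, map_mul, hcross1, mul_zero]
  have hp14 : p1 ^ 4 = p ^ 8 + q ^ 4 * sg (q ^ 4) := by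
    have h0 : p1 ^ 4 = (p1 ^ 2) ^ 2 := by ring
    rw [h0, hp1sq, add_pow_char, mul_pow, ← sg_pow, ← pow_mul, ← pow_mul]
    try norm_num
  have haq8 : aeval B (q ^ 4 * sg (q ^ 4)) = ((q.eval 1) ^ 8) • (1 : S) := by
    rw [map_mul, aeval_sg_pow4 B hB q, ← map_mul, ← pow_add,
      show (4 + 4 : ℕ) = 8 by norm_num, aeval_pow8 B hB]
  have e2 : (p + sg p) ^ 2 = p ^ 2 + sg (p ^ 2) := by
    rw [add_pow_char, ← sg_pow]
  have e3 : (sg p + sg (sg p)) ^ 2 = sg (p ^ 2) + sg (sg (p ^ 2)) := by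
    rw [add_pow_char, ← sg_pow, ← sg_pow, ← sg_pow]
  have hq12 : (q1 * sg q1) ^ 2 = (q ^ 2 * sg (q ^ 2)) *
      ((p ^ 2 + sg (p ^ 2)) * (sg (p ^ 2) + sg (sg (p ^ 2)))) := by
    rw [hq1, sg_mul, sg_add]
    have e1 : (q * (p + sg p) * (sg q * (sg p + sg (sg p)))) ^ 2 =
        q ^ 2 * (sg q) ^ 2 * ((p + sg p) ^ 2 * (sg p + sg (sg p)) ^ 2) := by ring
    rw [e1, e2, e3, ← sg_pow]
    try ring
  have hcross2 : aeval B ((p ^ 2 + sg (p ^ 2)) * (sg (p ^ 2) + sg (sg (p ^ 2)))) = 0 := by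
    refine (cross B hB (p ^ 2)).trans ?_
    rw [show (p ^ 2) ^ 2 = p ^ 4 from by rw [← pow_mul]]
    exact h4sg B hB p
  have hterm1 : aeval B (p2 ^ 2) = (((p.eval 1) ^ 8) • (1 : S)) + ((q.eval 1) ^ 8) • 1 := by
    have hp2sq : p2 ^ 2 = p1 ^ 4 + (q1 * sg q1) ^ 2 := by
      rw [hp2, add_pow_char, ← pow_mul]
      try norm_num
    rw [hp2sq, map_add, hp14, map_add, aeval_pow8 B hB p, haq8, hq12, map_mul,
      hcross2, mul_zero, add_zero]
  have heval : ((p + q).eval 1) ^ 8 = (p.eval 1) ^ 8 + (q.eval 1) ^ 8 := by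
    rw [eval_add]
    have := add_pow_char_pow (R := F) (p := 2) (n := 3) (p.eval 1) (q.eval 1)
    norm_num at this
    exact this
  rw [hw8, hq3, zero_mul, add_zero, map_add, hterm1, hterm2, add_zero, heval, add_smul]

end full

end QDcalc
namespace QDaux
open Polynomial QDcalc

variable (F : Type) [Field F] [CharP F 2]

noncomputable def Bm : MonoidAlgebra F QD16 := MonoidAlgebra.of F QD16 aG
noncomputable def Ym : MonoidAlgebra F QD16 := MonoidAlgebra.of F QD16 xG

lemma hBm : Bm F ^ 8 = 1 := by rw [Bm, ← map_pow, haG8, map_one]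

lemma hYm : Ym F * Ym F = 1 := by
  rw [Ym, ← map_mul, ← pow_two, hxG2, map_one]

lemma hYBm : Ym F * Bm F = Bm F ^ 3 * Ym F := by
  rw [Ym, Bm, ← map_mul, hxa, map_mul, map_pow]

lemma span (w : MonoidAlgebra F QD16) :
    ∃ p q : F[X], w = aeval (Bm F) p + aeval (Bm F) q * Ym F := by
  induction w using MonoidAlgebra.induction_linear with
  | zero => exact ⟨0, 0, by simp⟩
  | add u v hu hv =>
      obtain ⟨p, q, rfl⟩ := hu
      obtain ⟨p', q', rfl⟩ := hv
      refine ⟨p + p', q + q', ?_⟩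
      rw [map_add, map_add, add_mul]
      abel
  | single g c =>
      obtain ⟨i, j, rfl⟩ := normal_form g
      have hsing : (MonoidAlgebra.single (aG ^ i * xG ^ j) c : MonoidAlgebra F QD16)
          = algebraMap F (MonoidAlgebra F QD16) c * (Bm F ^ i * Ym F ^ j) := by
        rw [Bm, Ym, ← map_pow, ← map_pow, ← map_mul]
        rw [MonoidAlgebra.coe_algebraMap]
        show _ = MonoidAlgebra.single 1 c * MonoidAlgebra.single _ 1
        rw [MonoidAlgebra.single_mul_single, one_mul, mul_one]
      rcases Nat.even_or_odd j with ⟨m, rfl⟩ | ⟨m, rfl⟩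
      · refine ⟨C c * X ^ i, 0, ?_⟩
        have hy : Ym F ^ (m + m) = 1 := by
          rw [← two_mul, pow_mul, pow_two, hYm, one_pow]
        rw [hsing, hy, mul_one, map_mul, aeval_C, aeval_X_pow, map_zero, zero_mul,
          add_zero]
      · refine ⟨0, C c * X ^ i, ?_⟩
        have hy : Ym F ^ (2 * m + 1) = Ym F := by
          rw [pow_add, pow_mul, pow_two, hYm, one_pow, pow_one, one_mul]
        rw [hsing, hy, map_mul, aeval_C, aeval_X_pow, map_zero, zero_add, mul_assoc]

noncomputable def eps : MonoidAlgebra F QD16 →ₐ[F] F := MonoidAlgebra.lift F F QD16 1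

lemma eps_of (g : QD16) : eps F (MonoidAlgebra.of F QD16 g) = 1 := by
  show eps F (MonoidAlgebra.single g 1) = 1
  rw [eps, MonoidAlgebra.lift_single]
  simp

lemma eps_aeval (p : F[X]) : eps F (aeval (Bm F) p) = p.eval 1 := by
  rw [← Polynomial.aeval_algHom_apply (eps F) (Bm F) p, Bm, eps_of]
  exact congrFun (Polynomial.coe_aeval_eq_eval (1 : F)) p

lemma master (w : MonoidAlgebra F QD16) : w ^ 8 = (eps F w) ^ 8 • 1 := by
  obtain ⟨p, q, rfl⟩ := span F w
  rw [key_pow8 (Bm F) (Ym F) (hBm F) (hYm F) (hYBm F) p q]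
  congr 2
  rw [map_add, map_mul, eps_aeval, eps_aeval, Ym, eps_of, mul_one, eval_add]

end QDaux

set_option maxHeartbeats 1000000 in
theorem oneAddJacobson_exponent_QD16 (F : Type) [Field F] [Fintype F] [CharP F 2]
    (n : ℕ) (hn : 0 < n) (hq : Fintype.card F = 2 ^ n)
    (V : Subgroup (MonoidAlgebra F QD16)ˣ)
    (hV : ∀ u : (MonoidAlgebra F QD16)ˣ,
      u ∈ V ↔ (u : MonoidAlgebra F QD16) - 1 ∈ (⊥ : Ideal (MonoidAlgebra F QD16)).jacobson) :
    Monoid.exponent V = 8 := by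
  classical
  -- the kernel of the augmentation map is a maximal ideal
  have hker_max : (RingHom.ker (QDaux.eps F)).IsMaximal := by
    rw [Ideal.isMaximal_iff]
    constructor
    · intro h1
      have := RingHom.mem_ker.mp h1
      rw [map_one] at this
      exact one_ne_zero this
    · intro J x hIJ hxI hxJ
      have hx : QDaux.eps F x ≠ 0 := fun h => hxI (RingHom.mem_ker.mpr h)
      have hy : algebraMap F (MonoidAlgebra F QD16) (QDaux.eps F x)⁻¹ * x ∈ J :=
        J.mul_mem_left _ hxJ
      have h1y : 1 - algebraMap F (MonoidAlgebra F QD16) (QDaux.eps F x)⁻¹ * x ∈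
          RingHom.ker (QDaux.eps F) := by
        rw [RingHom.mem_ker, map_sub, map_one, map_mul, AlgHom.commutes,
          Algebra.algebraMap_self_apply, inv_mul_cancel₀ hx, sub_self]
      have := J.add_mem (hIJ h1y) hy
      simpa using this
  have hjac_le : (⊥ : Ideal (MonoidAlgebra F QD16)).jacobson ≤ RingHom.ker (QDaux.eps F) :=
    sInf_le ⟨bot_le, hker_max⟩
  have hker_le : RingHom.ker (QDaux.eps F) ≤ (⊥ : Ideal (MonoidAlgebra F QD16)).jacobson := by
    refine le_sInf ?_
    rintro M ⟨-, hM⟩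
    intro k hk
    by_contra hkM
    have hlt : M < M ⊔ Ideal.span {k} := by
      refine lt_of_le_of_ne le_sup_left ?_
      intro he
      exact hkM (he ▸ ((le_sup_right : Ideal.span {k} ≤ M ⊔ Ideal.span {k}) (Ideal.subset_span rfl)))
    have htop : M ⊔ Ideal.span {k} = ⊤ := hM.out.2 _ hlt
    have h1 : (1 : MonoidAlgebra F QD16) ∈ M ⊔ Ideal.span {k} := by
      rw [htop]; trivial
    obtain ⟨m, hm, s, hs, hms⟩ := Submodule.mem_sup.mp h1
    obtain ⟨r, rfl⟩ := Submodule.mem_span_singleton.mp hs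
    have hrk : QDaux.eps F (r • k) = 0 := by
      rw [smul_eq_mul, map_mul, RingHom.mem_ker.mp hk, mul_zero]
    have hnil : IsNilpotent (r • k) :=
      ⟨8, by rw [QDaux.master F, hrk, zero_pow (by norm_num), zero_smul]⟩
    have hm1 : m = 1 - r • k := eq_sub_of_add_eq hms
    have hunit : IsUnit m := by
      rw [hm1, sub_eq_neg_add]
      exact (hnil.neg).isUnit_add_one
    exact hM.ne_top (M.eq_top_of_isUnit_mem hm hunit)
  -- every element of V has order dividing 8
  have hpow8 : ∀ v : V, v ^ 8 = 1 := by
    intro v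
    have hz := (hV v.1).mp v.2
    have he : QDaux.eps F ((v.1 : MonoidAlgebra F QD16)) = 1 := by
      have h0 : QDaux.eps F ((v.1 : MonoidAlgebra F QD16) - 1) = 0 :=
        RingHom.mem_ker.mp (hjac_le hz)
      rw [map_sub, map_one, sub_eq_zero] at h0
      exact h0
    have h8 : ((v.1 : MonoidAlgebra F QD16)) ^ 8 = 1 := by
      rw [QDaux.master F, he, one_pow, one_smul]
    have h8u : (v.1 : (MonoidAlgebra F QD16)ˣ) ^ 8 = 1 := by
      ext
      rw [Units.val_pow_eq_pow_val, h8, Units.val_one]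
    apply Subtype.ext
    rw [SubmonoidClass.coe_pow, h8u, OneMemClass.coe_one]
  -- the distinguished unit coming from the generator a
  let ua : (MonoidAlgebra F QD16)ˣ :=
    ⟨MonoidAlgebra.of F QD16 QDaux.aG, MonoidAlgebra.of F QD16 QDaux.aG⁻¹,
      by rw [← map_mul, mul_inv_cancel, map_one],
      by rw [← map_mul, inv_mul_cancel, map_one]⟩
  have hmem : ua ∈ V := by
    rw [hV]
    apply hker_le
    rw [RingHom.mem_ker]
    show QDaux.eps F (MonoidAlgebra.of F QD16 QDaux.aG - 1) = 0
    rw [map_sub, map_one, QDaux.eps_of, sub_self]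
  let va : V := ⟨ua, hmem⟩
  have hva4 : va ^ (2 ^ 2) ≠ 1 := by
    intro h
    have hu : ua ^ 4 = 1 := by
      have h' : ((va ^ (2 ^ 2) : V) : (MonoidAlgebra F QD16)ˣ) = 1 := by rw [h]; rfl
      rwa [show ((va ^ (2 ^ 2) : V) : (MonoidAlgebra F QD16)ˣ) = ua ^ 4 from rfl] at h'
    have h4 : (MonoidAlgebra.of F QD16 QDaux.aG) ^ 4 = 1 := by
      have := congrArg Units.val hu
      rwa [Units.val_pow_eq_pow_val, Units.val_one] at this
    have heq : MonoidAlgebra.of F QD16 (QDaux.aG ^ 4) = MonoidAlgebra.of F QD16 1 := by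
      rw [map_pow, map_one]; exact h4
    exact QDaux.aG4_ne_one (MonoidAlgebra.of_injective heq)
  have hva8 : va ^ (2 ^ (2 + 1)) = 1 := by
    have := hpow8 va
    simpa using this
  have hord : orderOf va = 8 := by
    have := orderOf_eq_prime_pow (x := va) (p := 2) (n := 2) hva4 hva8
    simpa using this
  refine Nat.dvd_antisymm ?_ ?_
  · exact Monoid.exponent_dvd_of_forall_pow_eq_one hpow8
  · rw [← hord]
    exact Monoid.order_dvd_exponent va
end

section
/- Let F_q be a finite field of characteristic 2 with q = 2^n elements. Then the group V = 1 + J(F_q[QD_16]) is nilpotent of class exactly 4; that is, the lower central series of V satisfies γ_5(V) = 1 but γ_4(V) ≠ 1. -/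
set_option linter.unusedVariables false
set_option linter.unusedSectionVars false

set_option maxRecDepth 40000

open scoped commutatorElement

/-- Multiplication table for the quasidihedral group of order 16, where index
`2*i+s` encodes `a^i x^s`: entry `(16*k+j)` (4 bits) is the index of `gi k * gi j`. -/
def gT : Nat := 96302879745635543974192641897405087605171385624415208142002255117546682446937389698091139496326215986752783328953437705410443496599494570574039477806340960197083458991866584545348925698789645269472301061253033177193484762798509183192165176137900724388715870296621919271666666804385547285374706667857678447120

/-- Inversion table. -/
def gIT : Nat := 8274298446049754640

def tbl (k j : ℕ) : ℕ := (gT >>> (4*(16*k+j))) &&& 15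
def itbl (k : ℕ) : ℕ := (gIT >>> (4*k)) &&& 15

/-- The concrete quasidihedral group of order 16. -/
def G0 : Type := Fin 16

instance : DecidableEq G0 := inferInstanceAs (DecidableEq (Fin 16))
instance : Fintype G0 := inferInstanceAs (Fintype (Fin 16))

/-- the `k`-th element of `G0`. -/
def gi (k : ℕ) : G0 := (⟨k % 16, Nat.mod_lt _ (by norm_num)⟩ : Fin 16)

def gval (g : G0) : ℕ := (g : Fin 16).val

theorem gi_gval (g : G0) : gi (gval g) = g := by
  show Fin.mk _ _ = _
  exact Fin.ext (Nat.mod_eq_of_lt (g : Fin 16).isLt)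

theorem gval_lt (g : G0) : gval g < 16 := (g : Fin 16).isLt

set_option maxHeartbeats 1000000 in
instance : Group G0 where
  mul a b := gi (tbl (gval a) (gval b))
  one := gi 0
  inv a := gi (itbl (gval a))
  mul_assoc := by decide
  one_mul := by decide
  mul_one := by decide
  inv_mul_cancel := by decide

set_option maxHeartbeats 1000000 in
theorem tbl_correct : ∀ k ∈ List.range 16, ∀ j ∈ List.range 16,
    tbl k j < 16 ∧ gi (tbl k j) = gi k * gi j := by decide

/-- xor-fold over the 16 bits of `m`. -/
def xfold (m : ℕ) (f : ℕ → ℕ) : ℕ :=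
  (List.range 16).foldl (fun a k => if m.testBit k then a ^^^ f k else a) 0

def lmulN (k m : ℕ) : ℕ := xfold m (fun j => 2 ^ tbl k j)

def mulN (m m' : ℕ) : ℕ := xfold m (fun k => lmulN k m')

def red (L : List (ℕ × ℕ)) (v : ℕ) : ℕ :=
  L.foldl (fun w p => if w.testBit p.1 then w ^^^ p.2 else w) v
def B0 : List (Nat × Nat) := [(15, 32769), (14, 16385), (13, 8193), (12, 4097), (11, 2049), (10, 1025), (9, 513), (8, 257), (7, 129), (6, 65), (5, 33), (4, 17), (3, 9), (2, 5), (1, 3)]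
def B1 : List (Nat × Nat) := [(15, 32776), (14, 16388), (13, 8194), (12, 4097), (11, 2056), (10, 1028), (9, 514), (8, 257), (7, 136), (6, 68), (5, 34), (4, 17)]
def B2 : List (Nat × Nat) := [(15, 32896), (14, 16448), (13, 8224), (12, 4112), (11, 2056), (10, 1028), (9, 514), (8, 257)]
def B3 : List (Nat × Nat) := [(15, 34952), (14, 17476), (13, 8738), (12, 4369)]
def B4 : List (Nat × Nat) := []
def Q2 : List (Nat × Nat) := [(15, 32775), (14, 16388), (13, 8194), (12, 4097), (11, 2055), (10, 1028), (9, 514), (8, 257), (7, 135), (6, 68), (5, 34), (4, 17), (3, 15)]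
def Q3 : List (Nat × Nat) := [(15, 32793), (14, 16405), (13, 8211), (12, 4112), (11, 2056), (10, 1028), (9, 514), (8, 257), (7, 153), (6, 85), (5, 51)]
def Q4 : List (Nat × Nat) := [(15, 32895), (14, 16448), (13, 8224), (12, 4112), (11, 2056), (10, 1028), (9, 514), (8, 257), (7, 255)]
def Q5 : List (Nat × Nat) := [(15, 33153), (14, 16705), (13, 8481), (12, 4369), (11, 2313), (10, 1285), (9, 771)]
def Q6 : List (Nat × Nat) := [(15, 34695), (14, 17476), (13, 8738), (12, 4369), (11, 3855)]
def Q7 : List (Nat × Nat) := [(15, 39321), (14, 21845), (13, 13107)]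
def Q8 : List (Nat × Nat) := [(15, 65535)]
def Q9 : List (Nat × Nat) := []
def Q10 : List (Nat × Nat) := []
def um1 : Nat := 2048
def vm1 : Nat := 8
def um2 : Nat := 16401
def vm2 : Nat := 20549
def um3 : Nat := 641
def vm3 : Nat := 4990
def um4 : Nat := 16393
def vm4 : Nat := 50876
-- tdiff = 15

set_option maxHeartbeats 4000000 in
theorem fact0 : ∀ p ∈ B0, ∀ g ∈ List.range 16,
    red B0 (mulN (2^g) p.2) = 0 ∧ red B0 (mulN p.2 (2^g)) = 0 ∧
    red B1 (mulN (2^g) p.2 ^^^ mulN p.2 (2^g)) = 0 := by decide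

set_option maxHeartbeats 4000000 in
theorem fact1 : ∀ p ∈ B1, ∀ g ∈ List.range 16,
    red B1 (mulN (2^g) p.2) = 0 ∧ red B1 (mulN p.2 (2^g)) = 0 ∧
    red B2 (mulN (2^g) p.2 ^^^ mulN p.2 (2^g)) = 0 := by decide

set_option maxHeartbeats 4000000 in
theorem fact2 : ∀ p ∈ B2, ∀ g ∈ List.range 16,
    red B2 (mulN (2^g) p.2) = 0 ∧ red B2 (mulN p.2 (2^g)) = 0 ∧
    red B3 (mulN (2^g) p.2 ^^^ mulN p.2 (2^g)) = 0 := by decide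

set_option maxHeartbeats 4000000 in
theorem fact3 : ∀ p ∈ B3, ∀ g ∈ List.range 16,
    red B3 (mulN (2^g) p.2) = 0 ∧ red B3 (mulN p.2 (2^g)) = 0 ∧
    red B4 (mulN (2^g) p.2 ^^^ mulN p.2 (2^g)) = 0 := by decide

set_option maxHeartbeats 4000000 in
theorem pfact1 : ∀ p ∈ B0, ∀ q ∈ B0, red Q2 (mulN p.2 q.2) = 0 := by decide
set_option maxHeartbeats 4000000 in
theorem pfact2 : ∀ p ∈ Q2, ∀ q ∈ B0, red Q3 (mulN p.2 q.2) = 0 := by decide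
set_option maxHeartbeats 4000000 in
theorem pfact3 : ∀ p ∈ Q3, ∀ q ∈ B0, red Q4 (mulN p.2 q.2) = 0 := by decide
set_option maxHeartbeats 4000000 in
theorem pfact4 : ∀ p ∈ Q4, ∀ q ∈ B0, red Q5 (mulN p.2 q.2) = 0 := by decide
set_option maxHeartbeats 4000000 in
theorem pfact5 : ∀ p ∈ Q5, ∀ q ∈ B0, red Q6 (mulN p.2 q.2) = 0 := by decide
set_option maxHeartbeats 4000000 in
theorem pfact6 : ∀ p ∈ Q6, ∀ q ∈ B0, red Q7 (mulN p.2 q.2) = 0 := by decide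
set_option maxHeartbeats 4000000 in
theorem pfact7 : ∀ p ∈ Q7, ∀ q ∈ B0, red Q8 (mulN p.2 q.2) = 0 := by decide
set_option maxHeartbeats 4000000 in
theorem pfact8 : ∀ p ∈ Q8, ∀ q ∈ B0, red Q9 (mulN p.2 q.2) = 0 := by decide

-- witness units and their inverses
set_option maxHeartbeats 4000000 in
theorem wfact_inv :
    (mulN um1 vm1 = 1 ∧ mulN vm1 um1 = 1) ∧
    (mulN um2 vm2 = 1 ∧ mulN vm2 um2 = 1) ∧
    (mulN um3 vm3 = 1 ∧ mulN vm3 um3 = 1) ∧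
    (mulN um4 vm4 = 1 ∧ mulN vm4 um4 = 1) := by decide

set_option maxHeartbeats 4000000 in
theorem wfact_mem :
    red B0 (um1 ^^^ 1) = 0 ∧ red B0 (um2 ^^^ 1) = 0 ∧
    red B0 (um3 ^^^ 1) = 0 ∧ red B0 (um4 ^^^ 1) = 0 := by decide

/-- the ring element `⁅⁅u1,u2⁆,u3⁆` (Mathlib convention `⁅a,b⁆ = a b a⁻¹ b⁻¹`)
as a mask: `z2 u3 z2⁻¹ u3⁻¹` with `z2 = u1 u2 v1 v2`. -/
def z2N : ℕ := mulN (mulN (mulN um1 um2) vm1) vm2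
def z2iN : ℕ := mulN (mulN (mulN um2 um1) vm2) vm1
def z3m : ℕ := mulN (mulN (mulN z2N um3) z2iN) vm3

set_option maxHeartbeats 4000000 in
theorem wfact_ne : (mulN z3m um4).testBit 15 = true ∧ (mulN um4 z3m).testBit 15 = false := by decide

section Ev

variable {F : Type} [Field F] [CharP F 2]

local notation "R2" => MonoidAlgebra F G0

noncomputable def ev (F : Type) [Field F] (m : ℕ) : MonoidAlgebra F G0 :=
  ∑ k ∈ Finset.range 16, MonoidAlgebra.single (gi k) (if m.testBit k then (1:F) else 0)

theorem char2_one_add_one : (1 + 1 : F) = 0 := by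
  have := CharP.cast_eq_zero F 2
  rwa [Nat.cast_ofNat, ← one_add_one_eq_two] at this

theorem char2_add_self (x : R2) : x + x = 0 := by
  calc x + x = (1+1 : F) • x := by rw [add_smul, one_smul]
  _ = 0 := by rw [char2_one_add_one, zero_smul]

theorem char2_sub (x y : R2) : x - y = x + y := by
  rw [sub_eq_add_neg, neg_eq_of_add_eq_zero_left (char2_add_self y)]

theorem ev_zero : ev F 0 = 0 := by simp [ev]

theorem ev_xor (a b : ℕ) : ev F (a ^^^ b) = ev F a + ev F b := by
  rw [ev, ev, ev, ← Finset.sum_add_distrib]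
  refine Finset.sum_congr rfl fun k _ => ?_
  rw [← MonoidAlgebra.single_add]
  congr 1
  rw [Nat.testBit_xor]
  cases ha : a.testBit k <;> cases hb : b.testBit k <;>
    simp [char2_one_add_one]

theorem ev_two_pow {t : ℕ} (ht : t < 16) : ev F (2^t) = MonoidAlgebra.of F G0 (gi t) := by
  rw [ev]
  have step : ∀ k ∈ Finset.range 16,
      MonoidAlgebra.single (gi k) (if (2^t).testBit k then (1:F) else 0)
        = if t = k then MonoidAlgebra.single (gi k) (1:F) else 0 := by
    intro k _
    rw [Nat.testBit_two_pow]
    by_cases h : t = k <;> simp [h]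
  rw [Finset.sum_congr rfl step, Finset.sum_ite_eq]
  simp [Finset.mem_range.mpr ht, MonoidAlgebra.of_apply]

theorem ev_one : ev F 1 = 1 := by
  have : (1:ℕ) = 2^0 := rfl
  rw [this, ev_two_pow (by norm_num)]
  have : gi 0 = (1 : G0) := rfl
  rw [this, map_one]

theorem gi_inj {k t : ℕ} (hk : k < 16) (ht : t < 16) : gi k = gi t ↔ k = t := by
  unfold gi
  show (⟨k % 16, Nat.mod_lt _ (by norm_num)⟩ : Fin 16) = ⟨t % 16, Nat.mod_lt _ (by norm_num)⟩ ↔ k = t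
  rw [Fin.mk.injEq,
    Nat.mod_eq_of_lt hk, Nat.mod_eq_of_lt ht]

theorem ev_apply {t : ℕ} (ht : t < 16) (m : ℕ) :
    (ev F m).coeff (gi t) = if m.testBit t then (1:F) else 0 := by
  rw [ev, MonoidAlgebra.coeff_sum, Finset.sum_apply']
  have step : ∀ k ∈ Finset.range 16,
      (MonoidAlgebra.single (gi k) (if m.testBit k then (1:F) else 0)).coeff (gi t)
        = if k = t then (if m.testBit k then (1:F) else 0) else 0 := by
    intro k hk
    rw [MonoidAlgebra.coeff_single, Finsupp.single_apply]
    by_cases h : k = t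
    · simp [h]
    · rw [if_neg (fun hg => h ((gi_inj (Finset.mem_range.mp hk) ht).mp hg)), if_neg h]
  rw [Finset.sum_congr rfl step, Finset.sum_ite_eq']
  simp [Finset.mem_range.mpr ht]

theorem ev_foldl (L : List ℕ) (f : ℕ → ℕ) (m acc : ℕ) :
    ev F (L.foldl (fun a k => if m.testBit k then a ^^^ f k else a) acc)
      = ev F acc + (L.map (fun k => if m.testBit k then ev F (f k) else 0)).sum := by
  induction L generalizing acc with
  | nil => simp
  | cons k L ih =>
      rw [List.foldl_cons, ih, List.map_cons, List.sum_cons]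
      by_cases h : m.testBit k
      · rw [if_pos h, if_pos h, ev_xor, add_assoc]
      · rw [if_neg h, if_neg h, zero_add]

theorem list_sum_range {M : Type*} [AddCommMonoid M] (n : ℕ) (f : ℕ → M) :
    ((List.range n).map f).sum = ∑ k ∈ Finset.range n, f k := by
  induction n with
  | zero => simp
  | succ n ih => rw [List.range_succ, List.map_append, List.sum_append,
      Finset.sum_range_succ, ih]; simp

theorem ev_xfold (m : ℕ) (f : ℕ → ℕ) :
    ev F (xfold m f)
      = ∑ k ∈ Finset.range 16, (if m.testBit k then ev F (f k) else 0) := by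
  rw [xfold, ev_foldl, ev_zero, zero_add, list_sum_range]

theorem ev_lmulN {k : ℕ} (hk : k < 16) (m : ℕ) :
    ev F (lmulN k m) = MonoidAlgebra.of F G0 (gi k) * ev F m := by
  rw [lmulN, ev_xfold]
  rw [ev, Finset.mul_sum]
  refine Finset.sum_congr rfl fun j hj => ?_
  have hj16 := Finset.mem_range.mp hj
  have htbl := tbl_correct k (List.mem_range.mpr hk) j (List.mem_range.mpr hj16)
  by_cases h : m.testBit j
  · rw [if_pos h, if_pos h, ev_two_pow htbl.1, htbl.2, map_mul]
    simp [MonoidAlgebra.of_apply]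
  · rw [if_neg h, if_neg h]
    simp

theorem ev_mulN (a b : ℕ) : ev F (mulN a b) = ev F a * ev F b := by
  rw [mulN, ev_xfold, ev, Finset.sum_mul]
  refine Finset.sum_congr rfl fun k hk => ?_
  have hk16 := Finset.mem_range.mp hk
  by_cases h : a.testBit k
  · rw [if_pos h, if_pos h, ev_lmulN hk16, MonoidAlgebra.of_apply]
  · rw [if_neg h, if_neg h]
    simp

end Ev

section Span

variable {F : Type} [Field F] [CharP F 2]

local notation "R2" => MonoidAlgebra F G0

noncomputable def Mspan (F : Type) [Field F] (L : List (ℕ × ℕ)) :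
    Submodule F (MonoidAlgebra F G0) :=
  Submodule.span F {x | ∃ p ∈ L, ev F p.2 = x}

theorem mem_Mspan {L : List (ℕ × ℕ)} {p : ℕ × ℕ} (hp : p ∈ L) :
    ev F p.2 ∈ Mspan F L :=
  Submodule.subset_span ⟨p, hp, rfl⟩

theorem red_mem (L : List (ℕ × ℕ)) (N : Submodule F R2) (hL : ∀ p ∈ L, ev F p.2 ∈ N) :
    ∀ v, ev F (red L v) ∈ N → ev F v ∈ N := by
  induction L with
  | nil => intro v h; exact h
  | cons p L ih =>
      intro v h
      have hstep := ih (fun q hq => hL q (List.mem_cons_of_mem p hq))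
        (if v.testBit p.1 then v ^^^ p.2 else v) h
      by_cases hb : v.testBit p.1
      · rw [if_pos hb] at hstep
        have : ev F v = ev F ((v ^^^ p.2) ^^^ p.2) := by rw [Nat.xor_assoc, Nat.xor_self, Nat.xor_zero]
        rw [this, ev_xor]
        exact add_mem hstep (hL p List.mem_cons_self)
      · rwa [if_neg hb] at hstep

theorem red_zero_mem {L' : List (ℕ × ℕ)} {N : Submodule F R2}
    (hL' : ∀ p ∈ L', ev F p.2 ∈ N) {v : ℕ} (h : red L' v = 0) : ev F v ∈ N :=
  red_mem L' N hL' v (by rw [h, ev_zero]; exact zero_mem N)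

/-- All of `R2` is spanned by the `of (gi t)`. -/
theorem mul_mem_left_of_facts {L : List (ℕ × ℕ)}
    (hfact : ∀ p ∈ L, ∀ g ∈ List.range 16, red L (mulN (2^g) p.2) = 0) :
    ∀ (y : R2), ∀ x ∈ Mspan F L, y * x ∈ Mspan F L := by
  have step1 : ∀ t, t < 16 → ∀ x ∈ Mspan F L, MonoidAlgebra.of F G0 (gi t) * x ∈ Mspan F L := by
    intro t ht x hx
    induction hx using Submodule.span_induction with
    | mem x hxs =>
        obtain ⟨p, hp, rfl⟩ := hxs
        rw [← ev_two_pow ht, ← ev_mulN]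
        exact red_zero_mem (fun q hq => mem_Mspan hq) (hfact p hp t (List.mem_range.mpr ht))
    | zero => rw [mul_zero]; exact zero_mem _
    | add x y hx hy ihx ihy => rw [mul_add]; exact add_mem ihx ihy
    | smul a x hx ihx => rw [mul_smul_comm]; exact Submodule.smul_mem _ a ihx
  intro y x hx
  induction y using MonoidAlgebra.induction_on with
  | of g =>
      have := step1 (gval g) (gval_lt g) x hx
      rwa [gi_gval] at this
  | add f g hf hg => rw [add_mul]; exact add_mem hf hg
  | smul r f hf => rw [smul_mul_assoc]; exact Submodule.smul_mem _ r hf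

theorem mul_mem_right_of_facts {L : List (ℕ × ℕ)}
    (hfact : ∀ p ∈ L, ∀ g ∈ List.range 16, red L (mulN p.2 (2^g)) = 0) :
    ∀ (y : R2), ∀ x ∈ Mspan F L, x * y ∈ Mspan F L := by
  have step1 : ∀ t, t < 16 → ∀ x ∈ Mspan F L, x * MonoidAlgebra.of F G0 (gi t) ∈ Mspan F L := by
    intro t ht x hx
    induction hx using Submodule.span_induction with
    | mem x hxs =>
        obtain ⟨p, hp, rfl⟩ := hxs
        rw [← ev_two_pow ht, ← ev_mulN]
        exact red_zero_mem (fun q hq => mem_Mspan hq) (hfact p hp t (List.mem_range.mpr ht))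
    | zero => rw [zero_mul]; exact zero_mem _
    | add x y hx hy ihx ihy => rw [add_mul]; exact add_mem ihx ihy
    | smul a x hx ihx => rw [smul_mul_assoc]; exact Submodule.smul_mem _ a ihx
  intro y x hx
  induction y using MonoidAlgebra.induction_on with
  | of g =>
      have := step1 (gval g) (gval_lt g) x hx
      rwa [gi_gval] at this
  | add f g hf hg => rw [mul_add]; exact add_mem hf hg
  | smul r f hf => rw [mul_smul_comm]; exact Submodule.smul_mem _ r hf

theorem bracket_mem_of_facts {L L' : List (ℕ × ℕ)}
    (hfact : ∀ p ∈ L, ∀ g ∈ List.range 16,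
      red L' (mulN (2^g) p.2 ^^^ mulN p.2 (2^g)) = 0) :
    ∀ x ∈ Mspan F L, ∀ (y : R2), x * y - y * x ∈ Mspan F L' := by
  intro x hx
  induction hx using Submodule.span_induction with
  | mem x hxs =>
      obtain ⟨p, hp, rfl⟩ := hxs
      intro y
      induction y using MonoidAlgebra.induction_on with
      | of g =>
          rw [char2_sub]
          have h16 := gval_lt g
          have : MonoidAlgebra.of F G0 g = ev F (2 ^ gval g) := by
            rw [ev_two_pow h16, gi_gval]
          rw [this, ← ev_mulN, ← ev_mulN, add_comm, ← ev_xor]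
          exact red_zero_mem (fun q hq => mem_Mspan hq)
            (hfact p hp (gval g) (List.mem_range.mpr h16))
      | add f g hf hg =>
          have : ev F p.2 * (f + g) - (f + g) * ev F p.2
              = (ev F p.2 * f - f * ev F p.2) + (ev F p.2 * g - g * ev F p.2) := by noncomm_ring
          rw [this]; exact add_mem hf hg
      | smul r f hf =>
          have : ev F p.2 * (r • f) - (r • f) * ev F p.2
              = r • (ev F p.2 * f - f * ev F p.2) := by
            rw [smul_sub, mul_smul_comm, smul_mul_assoc]
          rw [this]; exact Submodule.smul_mem _ r hf
  | zero => intro y; simp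
  | add x y hx hy ihx ihy =>
      intro z
      have : (x + y) * z - z * (x + y) = (x * z - z * x) + (y * z - z * y) := by noncomm_ring
      rw [this]; exact add_mem (ihx z) (ihy z)
  | smul a x hx ihx =>
      intro z
      have : (a • x) * z - z * (a • x) = a • (x * z - z * x) := by
        rw [smul_sub, mul_smul_comm, smul_mul_assoc]
      rw [this]; exact Submodule.smul_mem _ a (ihx z)

theorem mul_chain_of_facts {L L' L'' : List (ℕ × ℕ)}
    (hfact : ∀ p ∈ L, ∀ q ∈ L', red L'' (mulN p.2 q.2) = 0) :
    ∀ x ∈ Mspan F L, ∀ y ∈ Mspan F L', x * y ∈ Mspan F L'' := by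
  intro x hx
  induction hx using Submodule.span_induction with
  | mem x hxs =>
      obtain ⟨p, hp, rfl⟩ := hxs
      intro y hy
      induction hy using Submodule.span_induction with
      | mem y hys =>
          obtain ⟨q, hq, rfl⟩ := hys
          rw [← ev_mulN]
          exact red_zero_mem (fun r hr => mem_Mspan hr) (hfact p hp q hq)
      | zero => rw [mul_zero]; exact zero_mem _
      | add y z hy hz ihy ihz => rw [mul_add]; exact add_mem ihy ihz
      | smul a y hy ihy => rw [mul_smul_comm]; exact Submodule.smul_mem _ a ihy
  | zero => intro y hy; rw [zero_mul]; exact zero_mem _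
  | add x z hx hz ihx ihz => intro y hy; rw [add_mul]; exact add_mem (ihx y hy) (ihz y hy)
  | smul a x hx ihx => intro y hy; rw [smul_mul_assoc]; exact Submodule.smul_mem _ a (ihx y hy)

end Span

section Aug

variable {F : Type} [Field F] [CharP F 2]

local notation "R2" => MonoidAlgebra F G0

set_option maxHeartbeats 1000000 in
theorem b0_complete : ∀ t ∈ List.range 16, t = 0 ∨ (t, 2^t ^^^ 1) ∈ B0 := by decide

theorem of_add_one_mem_M0 (g : G0) : MonoidAlgebra.of F G0 g + 1 ∈ Mspan F B0 := by
  have ht := gval_lt g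
  rcases b0_complete (gval g) (List.mem_range.mpr ht) with h0 | hmem
  · have hg : g = 1 := by
      have := gi_gval g
      rw [h0] at this
      exact this.symm
    rw [hg, map_one, char2_add_self]
    exact zero_mem _
  · have := mem_Mspan (F := F) hmem
    rwa [ev_xor, ev_two_pow ht, ev_one, gi_gval] at this

/-- the augmentation homomorphism of `R2`. -/
noncomputable def eps (F : Type) [Field F] : MonoidAlgebra F G0 →ₐ[F] F :=
  MonoidAlgebra.lift F F G0 1

theorem eps_surjective : Function.Surjective (eps F) :=
  fun c => ⟨algebraMap F _ c, (eps F).commutes c⟩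

theorem ker_eps_le_M0 {x : R2} (hx : eps F x = 0) : x ∈ Mspan F B0 := by
  have hsum : ∑ g ∈ x.coeff.support, (x.coeff g) • (MonoidAlgebra.of F G0 g + 1) = x := by
    have h1 : ∑ g ∈ x.coeff.support, (x.coeff g) • (MonoidAlgebra.of F G0 g) = x := by
      have : ∀ g ∈ x.coeff.support, (x.coeff g) • (MonoidAlgebra.of F G0 g)
          = MonoidAlgebra.single g (x.coeff g) := by
        intro g _
        rw [MonoidAlgebra.of_apply, MonoidAlgebra.smul_single', mul_one]
      rw [Finset.sum_congr rfl this]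
      exact MonoidAlgebra.sum_coeff_single x
    have h2 : ∑ g ∈ x.coeff.support, (x.coeff g) • (1:R2) = 0 := by
      rw [← Finset.sum_smul]
      have : ∑ g ∈ x.coeff.support, x.coeff g = eps F x := by
        rw [eps, MonoidAlgebra.lift_apply]
        refine (Finset.sum_congr rfl fun g _ => ?_).symm
        simp
      rw [this, hx, zero_smul]
    calc ∑ g ∈ x.coeff.support, (x.coeff g) • (MonoidAlgebra.of F G0 g + 1)
        = (∑ g ∈ x.coeff.support, (x.coeff g) • (MonoidAlgebra.of F G0 g))
          + ∑ g ∈ x.coeff.support, (x.coeff g) • (1:R2) := by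
          rw [← Finset.sum_add_distrib]
          exact Finset.sum_congr rfl fun g _ => smul_add _ _ _
      _ = x := by rw [h1, h2, add_zero]
  rw [← hsum]
  exact Submodule.sum_mem _ fun g _ => Submodule.smul_mem _ _ (of_add_one_mem_M0 g)

theorem Mspan_nil_eq_bot : Mspan F ([] : List (ℕ × ℕ)) = ⊥ := by
  rw [Mspan]
  convert Submodule.span_empty
  simp

theorem pow9_eq_zero {x : R2} (hx : x ∈ Mspan F B0) : x ^ 9 = 0 := by
  have h2 : x^2 ∈ Mspan F Q2 := by
    rw [pow_two]; exact mul_chain_of_facts pfact1 x hx x hx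
  have h3 : x^3 ∈ Mspan F Q3 := by
    rw [pow_succ]; exact mul_chain_of_facts pfact2 _ h2 x hx
  have h4 : x^4 ∈ Mspan F Q4 := by
    rw [pow_succ]; exact mul_chain_of_facts pfact3 _ h3 x hx
  have h5 : x^5 ∈ Mspan F Q5 := by
    rw [pow_succ]; exact mul_chain_of_facts pfact4 _ h4 x hx
  have h6 : x^6 ∈ Mspan F Q6 := by
    rw [pow_succ]; exact mul_chain_of_facts pfact5 _ h5 x hx
  have h7 : x^7 ∈ Mspan F Q7 := by
    rw [pow_succ]; exact mul_chain_of_facts pfact6 _ h6 x hx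
  have h8 : x^8 ∈ Mspan F Q8 := by
    rw [pow_succ]; exact mul_chain_of_facts pfact7 _ h7 x hx
  have h9 : x^9 ∈ Mspan F Q9 := by
    rw [pow_succ]; exact mul_chain_of_facts pfact8 _ h8 x hx
  rwa [show Q9 = ([] : List (ℕ × ℕ)) from rfl, Mspan_nil_eq_bot, Submodule.mem_bot] at h9

end Aug

section Iso

/-! ## The isomorphism `QD16 ≃* G0` -/

def A0 : G0 := gi 2
def X0 : G0 := gi 1

theorem g0rels : A0^8 = 1 ∧ X0^2 = 1 ∧ X0 * A0 * X0 * (A0^3)⁻¹ = 1 := by decide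

set_option maxHeartbeats 1000000 in
theorem g0_gen : ∀ z : G0, ∃ p : Fin 8 × Fin 2, A0^(p.1:ℕ) * X0^(p.2:ℕ) = z := by decide

def fgen : Fin 2 → G0 := fun i => if i = 0 then A0 else X0

theorem fgen_rels : ∀ r ∈ qdRels 4, FreeGroup.lift fgen r = 1 := by
  intro r hr
  simp only [qdRels, Set.mem_insert_iff, Set.mem_singleton_iff] at hr
  rcases hr with rfl | rfl | rfl
  · rw [map_pow, FreeGroup.lift_apply_of]
    show A0 ^ (2^(4-1)) = 1
    norm_num
    exact g0rels.1
  · rw [map_pow, FreeGroup.lift_apply_of]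
    show X0 ^ 2 = 1
    exact g0rels.2.1
  · rw [map_mul, map_inv, map_mul, map_mul, map_pow, FreeGroup.lift_apply_of, FreeGroup.lift_apply_of]
    show X0 * A0 * X0 * (A0 ^ (2^(4-2)-1))⁻¹ = 1
    norm_num
    exact g0rels.2.2

/-- The homomorphism `QD16 →* G0`. -/
def phi : QD16 →* G0 := PresentedGroup.toGroup fgen_rels

def qa : QD16 := PresentedGroup.of 0
def qx : QD16 := PresentedGroup.of 1

theorem phi_qa : phi qa = A0 := by
  show PresentedGroup.toGroup fgen_rels (PresentedGroup.of 0) = A0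
  rw [PresentedGroup.toGroup.of]
  rfl

theorem phi_qx : phi qx = X0 := by
  show PresentedGroup.toGroup fgen_rels (PresentedGroup.of 1) = X0
  rw [PresentedGroup.toGroup.of]
  rfl

theorem rel_eq_one {r : FreeGroup (Fin 2)} (hr : r ∈ qdRels 4) :
    PresentedGroup.mk (qdRels 4) r = 1 := by
  have : r ∈ Subgroup.normalClosure (qdRels 4) := Subgroup.subset_normalClosure hr
  exact (QuotientGroup.eq_one_iff r).mpr this

theorem qa_pow8 : qa ^ 8 = 1 := by
  have h : PresentedGroup.mk (qdRels 4) (FreeGroup.of 0 ^ (2^(4-1))) = 1 :=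
    rel_eq_one (by simp [qdRels])
  rw [map_pow] at h
  norm_num at h
  exact h

theorem qx_pow2 : qx ^ 2 = 1 := by
  have h : PresentedGroup.mk (qdRels 4) (FreeGroup.of 1 ^ 2) = 1 :=
    rel_eq_one (by simp [qdRels])
  rw [map_pow] at h
  exact h

theorem qx_inv : qx⁻¹ = qx :=
  inv_eq_of_mul_eq_one_right (by rw [← pow_two]; exact qx_pow2)

theorem qxa : qx * qa = qa ^ 3 * qx := by
  have h : PresentedGroup.mk (qdRels 4)
      (FreeGroup.of 1 * FreeGroup.of 0 * FreeGroup.of 1 * (FreeGroup.of 0 ^ (2^(4-2)-1))⁻¹) = 1 :=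
    rel_eq_one (by simp [qdRels])
  rw [map_mul, map_inv, map_mul, map_mul, map_pow] at h
  norm_num at h
  have h3 : qx * qa * qx = qa ^ 3 := by
    have := mul_inv_eq_one.mp h
    exact this
  calc qx * qa = qx * qa * qx * qx⁻¹ := by group
  _ = qa ^ 3 * qx := by rw [h3, qx_inv]

theorem qx_pow_qa : ∀ k : ℕ, qx * qa ^ k = qa ^ (3*k) * qx := by
  intro k
  induction k with
  | zero => simp
  | succ k ih =>
      calc qx * qa ^ (k+1) = (qx * qa ^ k) * qa := by rw [pow_succ, mul_assoc]
      _ = qa ^ (3*k) * (qx * qa) := by rw [ih, mul_assoc]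
      _ = qa ^ (3*k) * qa ^ 3 * qx := by rw [qxa, mul_assoc]
      _ = qa ^ (3*(k+1)) * qx := by rw [← pow_add]; ring_nf

theorem qa_mod (k : ℕ) : qa ^ k = qa ^ (k % 8) := by
  conv_lhs => rw [← Nat.div_add_mod k 8]
  rw [pow_add, pow_mul, qa_pow8, one_pow, one_mul]

theorem qx_mod (k : ℕ) : qx ^ k = qx ^ (k % 2) := by
  conv_lhs => rw [← Nat.div_add_mod k 2]
  rw [pow_add, pow_mul, qx_pow2, one_pow, one_mul]

/-- The subgroup of `QD16` of elements of the form `qa^i * qx^s`. -/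
def Sqd : Subgroup QD16 where
  carrier := {q | ∃ i s : ℕ, q = qa ^ i * qx ^ s}
  one_mem' := ⟨0, 0, by simp⟩
  mul_mem' := by
    rintro a b ⟨i, s, rfl⟩ ⟨j, t, rfl⟩
    rcases Nat.mod_two_eq_zero_or_one s with hs | hs
    · refine ⟨i + j, t, ?_⟩
      rw [qx_mod s, hs, pow_zero, mul_one, pow_add, mul_assoc]
    · refine ⟨i + 3*j, 1 + t, ?_⟩
      have h1 : qx ^ s = qx := by rw [qx_mod, hs, pow_one]
      rw [h1]
      calc qa ^ i * qx * (qa ^ j * qx ^ t)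
          = qa ^ i * (qx * qa ^ j) * qx ^ t := by group
        _ = qa ^ i * (qa ^ (3*j) * qx) * qx ^ t := by rw [qx_pow_qa]
        _ = qa ^ (i + 3*j) * qx ^ (1 + t) := by
            rw [pow_add, pow_add, pow_one]; group
  inv_mem' := by
    rintro a ⟨i, s, rfl⟩
    rcases Nat.mod_two_eq_zero_or_one s with hs | hs
    · have h1 : qx ^ s = 1 := by rw [qx_mod, hs, pow_zero]
      have hinv : (qa ^ i * qx ^ s) * (qa ^ (7*i) * qx ^ 0) = 1 := by
        rw [h1, pow_zero, mul_one, mul_one, ← pow_add,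
          show i + 7*i = 8*i by ring, pow_mul, qa_pow8, one_pow]
      rw [inv_eq_of_mul_eq_one_right hinv]
      exact ⟨7*i, 0, rfl⟩
    · have h1 : qx ^ s = qx := by rw [qx_mod, hs, pow_one]
      have hinv : (qa ^ i * qx ^ s) * (qa ^ (21*i) * qx ^ 1) = 1 := by
        rw [h1, pow_one]
        calc qa ^ i * qx * (qa ^ (21*i) * qx)
            = qa ^ i * (qx * qa ^ (21*i)) * qx := by group
          _ = qa ^ i * (qa ^ (3*(21*i)) * qx) * qx := by rw [qx_pow_qa]
          _ = qa ^ (i + 3*(21*i)) * (qx * qx) := by rw [pow_add]; group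
          _ = 1 := by
              rw [show i + 3*(21*i) = 8*(8*i) by ring, pow_mul, qa_pow8, one_pow,
                ← pow_two, qx_pow2, one_mul]
      rw [inv_eq_of_mul_eq_one_right hinv]
      exact ⟨21*i, 1, rfl⟩

theorem Sqd_eq_top : Sqd = ⊤ := by
  refine eq_top_iff.mpr ((PresentedGroup.closure_range_of (qdRels 4)).symm.le.trans
    ((Subgroup.closure_le (K := Sqd)).mpr ?_))
  rintro x ⟨i, rfl⟩
  fin_cases i
  · exact ⟨1, 0, by simp [qa]; exact (pow_one _).symm⟩
  · exact ⟨0, 1, by simp [qx]; exact (pow_one _).symm⟩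

/-- Parameterization of `QD16`. -/
def psi (p : Fin 8 × Fin 2) : QD16 := qa ^ (p.1 : ℕ) * qx ^ (p.2 : ℕ)

theorem psi_surjective : Function.Surjective psi := by
  intro q
  have hq : q ∈ Sqd := by rw [Sqd_eq_top]; trivial
  obtain ⟨i, s, rfl⟩ := hq
  refine ⟨(⟨i % 8, Nat.mod_lt _ (by norm_num)⟩, ⟨s % 2, Nat.mod_lt _ (by norm_num)⟩), ?_⟩
  show qa ^ (i % 8) * qx ^ (s % 2) = qa ^ i * qx ^ s
  rw [← qa_mod, ← qx_mod]

instance : Finite QD16 := Finite.of_surjective psi psi_surjective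

noncomputable instance : Fintype QD16 := Fintype.ofFinite QD16

theorem phi_surjective : Function.Surjective phi := by
  intro z
  obtain ⟨p, hp⟩ := g0_gen z
  refine ⟨psi p, ?_⟩
  rw [psi, map_mul, map_pow, map_pow, phi_qa, phi_qx, hp]

theorem card_G0 : Fintype.card G0 = 16 := by
  show Fintype.card (Fin 16) = 16
  exact Fintype.card_fin 16

theorem phi_bijective : Function.Bijective phi := by
  rw [Fintype.bijective_iff_surjective_and_card]
  refine ⟨phi_surjective, le_antisymm ?_ ?_⟩
  · have h1 := Fintype.card_le_of_surjective psi psi_surjective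
    simpa [card_G0] using h1
  · exact Fintype.card_le_of_surjective phi phi_surjective

/-- The isomorphism `QD16 ≃* G0`. -/
noncomputable def eIso : QD16 ≃* G0 := MulEquiv.ofBijective phi phi_bijective

end Iso

section Main

variable {F : Type} [Field F] [CharP F 2]

local notation "R1" => MonoidAlgebra F QD16
local notation "R2" => MonoidAlgebra F G0

/-- The algebra isomorphism `F[QD16] ≃ F[G0]`. -/
noncomputable def Ae (F : Type) [Field F] : MonoidAlgebra F QD16 ≃ₐ[F] MonoidAlgebra F G0 :=
  MonoidAlgebra.domCongr F F eIso

theorem eps_Ae_surjective : Function.Surjective ((eps F).comp (Ae F).toAlgHom) :=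
  eps_surjective.comp (Ae F).surjective

theorem jac_le_ker :
    (⊥ : Ideal R1).jacobson ≤ RingHom.ker ((eps F).comp (Ae F).toAlgHom).toRingHom := by
  rw [Ideal.jacobson]
  exact sInf_le ⟨bot_le,
    RingHom.ker_isMaximal_of_surjective _ eps_Ae_surjective⟩

theorem mem_M0_of_jac {x : MonoidAlgebra F QD16}
    (hx : x ∈ (⊥ : Ideal (MonoidAlgebra F QD16)).jacobson) : (Ae F) x ∈ Mspan F B0 := by
  apply ker_eps_le_M0
  have := jac_le_ker hx
  rwa [RingHom.mem_ker] at this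

theorem jac_of_mem_M0 {x : MonoidAlgebra F QD16} (hx : (Ae F) x ∈ Mspan F B0) :
    x ∈ (⊥ : Ideal (MonoidAlgebra F QD16)).jacobson := by
  rw [Ideal.jacobson]
  refine Submodule.mem_sInf.mpr fun J hJ => ?_
  have hmax : Ideal.IsMaximal J := hJ.2
  by_contra hxJ
  have hlt : J < J ⊔ Ideal.span {x} :=
    lt_of_le_of_ne le_sup_left
      (fun heq => hxJ (heq ▸ Submodule.mem_sup_right (Submodule.mem_span_singleton_self x)))
  have htop : J ⊔ Ideal.span {x} = ⊤ := hmax.out.2 _ hlt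
  have h1 : (1 : R1) ∈ J ⊔ Ideal.span {x} := htop ▸ Submodule.mem_top
  obtain ⟨j, hj, z, hz, hjz⟩ := Submodule.mem_sup.mp h1
  obtain ⟨r, rfl⟩ := Submodule.mem_span_singleton.mp hz
  have hrx : (Ae F) (r • x) ∈ Mspan F B0 := by
    rw [smul_eq_mul, map_mul]
    exact mul_mem_left_of_facts (fun p hp g hg => (fact0 p hp g hg).1) _ _ hx
  have hnil : (r • x) ^ 9 = 0 := by
    apply (Ae F).injective
    rw [map_pow, map_zero]
    exact pow9_eq_zero hrx
  have hu : (∑ i ∈ Finset.range 9, (r • x) ^ i) * (1 - r • x) = 1 := by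
    have hg := geom_sum_mul (r • x) 9
    rw [hnil, zero_sub] at hg
    have h' : (∑ i ∈ Finset.range 9, (r • x) ^ i) * (1 - r • x)
        = -((∑ i ∈ Finset.range 9, (r • x) ^ i) * ((r • x) - 1)) := by noncomm_ring
    rw [h', hg, neg_neg]
  have hj' : j = 1 - r • x := eq_sub_of_add_eq hjz
  have hone : (1 : R1) ∈ J := by
    have := Ideal.mul_mem_left J (∑ i ∈ Finset.range 9, (r • x) ^ i) hj
    rwa [hj', hu] at this
  exact hmax.ne_top ((Ideal.eq_top_iff_one J).mpr hone)

variable (V : Subgroup (MonoidAlgebra F QD16)ˣ)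

/-- coercion of an element of `V` to the group algebra. -/
def theta (u : ↥V) : MonoidAlgebra F QD16 := ((u : (MonoidAlgebra F QD16)ˣ) : MonoidAlgebra F QD16)

theorem theta_mul (a b : ↥V) : theta V (a * b) = theta V a * theta V b := rfl

theorem theta_one : theta V (1 : ↥V) = 1 := rfl

theorem theta_inv_mul (a : ↥V) : theta V a⁻¹ * theta V a = 1 := by
  show ((↑(a⁻¹) : (MonoidAlgebra F QD16)ˣ) : MonoidAlgebra F QD16) * _ = 1
  rw [InvMemClass.coe_inv]
  exact Units.inv_mul _

/-- The subgroup of `V` of elements `u` with `Ae u - 1` in a given left ideal. -/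
noncomputable def Hsub (L : List (ℕ × ℕ))
    (hleft : ∀ (y : R2), ∀ x ∈ Mspan F L, y * x ∈ Mspan F L) : Subgroup ↥V where
  carrier := {u | (Ae F) (theta V u) - 1 ∈ Mspan F L}
  one_mem' := by
    show (Ae F) (theta V 1) - 1 ∈ Mspan F L
    rw [theta_one, map_one, sub_self]
    exact zero_mem _
  mul_mem' := by
    intro a b ha hb
    show (Ae F) (theta V (a * b)) - 1 ∈ Mspan F L
    have key : (Ae F) (theta V (a * b)) - 1
        = ((Ae F) (theta V a) - 1) * ((Ae F) (theta V b) - 1)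
          + (((Ae F) (theta V a) - 1) + ((Ae F) (theta V b) - 1)) := by
      rw [theta_mul, map_mul]
      noncomm_ring
    rw [key]
    exact add_mem (hleft _ _ hb) (add_mem ha hb)
  inv_mem' := by
    intro a ha
    show (Ae F) (theta V a⁻¹) - 1 ∈ Mspan F L
    have key : (Ae F) (theta V a⁻¹) - 1
        = -((Ae F) (theta V a⁻¹) * ((Ae F) (theta V a) - 1)) := by
      rw [mul_sub, ← map_mul, theta_inv_mul, map_one, neg_sub, mul_one]
    rw [key]
    exact neg_mem (hleft _ _ ha)

theorem comm_val_sub_one (u w : (MonoidAlgebra F QD16)ˣ) :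
    ((⁅u, w⁆ : (MonoidAlgebra F QD16)ˣ) : MonoidAlgebra F QD16) - 1
      = (((↑u : MonoidAlgebra F QD16) - 1) * ((↑w : MonoidAlgebra F QD16) - 1)
          - ((↑w : MonoidAlgebra F QD16) - 1) * ((↑u : MonoidAlgebra F QD16) - 1))
        * ((↑u⁻¹ * ↑w⁻¹ : MonoidAlgebra F QD16)) := by
  have h1 : ((↑u : MonoidAlgebra F QD16) - 1) * ((↑w : MonoidAlgebra F QD16) - 1)
      - ((↑w : MonoidAlgebra F QD16) - 1) * ((↑u : MonoidAlgebra F QD16) - 1)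
      = ↑u * ↑w - ↑w * ↑u := by noncomm_ring
  rw [h1, sub_mul]
  have h2 : ((↑w : MonoidAlgebra F QD16) * ↑u) * ((↑u⁻¹ * ↑w⁻¹ : MonoidAlgebra F QD16)) = 1 := by
    rw [mul_assoc, ← mul_assoc ((↑u : MonoidAlgebra F QD16)), Units.mul_inv, one_mul,
      Units.mul_inv]
  have h3 : ((⁅u, w⁆ : (MonoidAlgebra F QD16)ˣ) : MonoidAlgebra F QD16)
      = ((↑u : MonoidAlgebra F QD16) * ↑w) * ((↑u⁻¹ * ↑w⁻¹ : MonoidAlgebra F QD16)) := by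
    rw [commutatorElement]
    simp only [Units.val_mul, mul_assoc]
  rw [h3, h2]

theorem lcs_step {L L' : List (ℕ × ℕ)}
    (hleft : ∀ (y : R2), ∀ x ∈ Mspan F L, y * x ∈ Mspan F L)
    (hleft' : ∀ (y : R2), ∀ x ∈ Mspan F L', y * x ∈ Mspan F L')
    (hright' : ∀ (y : R2), ∀ x ∈ Mspan F L', x * y ∈ Mspan F L')
    (hbr : ∀ x ∈ Mspan F L, ∀ (y : R2), x * y - y * x ∈ Mspan F L')
    (n : ℕ) (IH : Subgroup.lowerCentralSeries (⊤ : Subgroup ↥V) n ≤ Hsub V L hleft) :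
    Subgroup.lowerCentralSeries (⊤ : Subgroup ↥V) (n+1) ≤ Hsub V L' hleft' := by
  rw [lowerCentralSeries_succ]
  refine Subgroup.commutator_le.mpr fun p hp q _ => ?_
  have hpL : (Ae F) (theta V p) - 1 ∈ Mspan F L := IH hp
  show (Ae F) (theta V ⁅p, q⁆) - 1 ∈ Mspan F L'
  have hco : theta V ⁅p, q⁆
      = ((⁅(↑p : (MonoidAlgebra F QD16)ˣ), (↑q : (MonoidAlgebra F QD16)ˣ)⁆ :
          (MonoidAlgebra F QD16)ˣ) : MonoidAlgebra F QD16) := rfl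
  have hone : (Ae F) (theta V ⁅p, q⁆) - 1 = (Ae F) (theta V ⁅p, q⁆ - 1) := by
    rw [map_sub, map_one]
  rw [hone, hco, comm_val_sub_one, map_mul]
  refine hright' _ _ ?_
  have hbrm := hbr _ hpL ((Ae F) (theta V q) - 1)
  have heq : (Ae F) ((((↑p : (MonoidAlgebra F QD16)ˣ) : MonoidAlgebra F QD16) - 1)
          * (((↑q : (MonoidAlgebra F QD16)ˣ) : MonoidAlgebra F QD16) - 1)
        - (((↑q : (MonoidAlgebra F QD16)ˣ) : MonoidAlgebra F QD16) - 1)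
          * (((↑p : (MonoidAlgebra F QD16)ˣ) : MonoidAlgebra F QD16) - 1))
      = ((Ae F) (theta V p) - 1) * ((Ae F) (theta V q) - 1)
      - ((Ae F) (theta V q) - 1) * ((Ae F) (theta V p) - 1) := by
    rw [map_sub, map_mul, map_sub, map_sub, map_mul, map_sub, map_sub, map_one]
    rfl
  rw [heq]
  exact hbrm

end Main

section Witness

variable {F : Type} [Field F] [CharP F 2]

local notation "R1" => MonoidAlgebra F QD16
local notation "R2" => MonoidAlgebra F G0

/-- build a unit of `F[G0]` from masks `u, v` with `u * v = v * u = 1`. -/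
noncomputable def mkUnit (u v : ℕ) (h1 : mulN u v = 1) (h2 : mulN v u = 1) :
    (MonoidAlgebra F G0)ˣ :=
  ⟨ev F u, ev F v, by rw [← ev_mulN, h1, ev_one], by rw [← ev_mulN, h2, ev_one]⟩

noncomputable def U1' (F : Type) [Field F] [CharP F 2] : (MonoidAlgebra F G0)ˣ :=
  mkUnit um1 vm1 wfact_inv.1.1 wfact_inv.1.2
noncomputable def U2' (F : Type) [Field F] [CharP F 2] : (MonoidAlgebra F G0)ˣ :=
  mkUnit um2 vm2 wfact_inv.2.1.1 wfact_inv.2.1.2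
noncomputable def U3' (F : Type) [Field F] [CharP F 2] : (MonoidAlgebra F G0)ˣ :=
  mkUnit um3 vm3 wfact_inv.2.2.1.1 wfact_inv.2.2.1.2
noncomputable def U4' (F : Type) [Field F] [CharP F 2] : (MonoidAlgebra F G0)ˣ :=
  mkUnit um4 vm4 wfact_inv.2.2.2.1 wfact_inv.2.2.2.2

/-- the monoid homomorphism `R2ˣ → R1ˣ` induced by `Ae⁻¹`. -/
noncomputable def AeSymmM (F : Type) [Field F] [CharP F 2] :
    MonoidAlgebra F G0 →* MonoidAlgebra F QD16 :=
  ((Ae F).symm : MonoidAlgebra F G0 ≃ₐ[F] MonoidAlgebra F QD16).toAlgHom.toRingHom.toMonoidHom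

noncomputable def AeM (F : Type) [Field F] [CharP F 2] :
    MonoidAlgebra F QD16 →* MonoidAlgebra F G0 :=
  (Ae F).toAlgHom.toRingHom.toMonoidHom

noncomputable def U1 (F : Type) [Field F] [CharP F 2] : (MonoidAlgebra F QD16)ˣ :=
  Units.map (AeSymmM F) (U1' F)
noncomputable def U2 (F : Type) [Field F] [CharP F 2] : (MonoidAlgebra F QD16)ˣ :=
  Units.map (AeSymmM F) (U2' F)
noncomputable def U3 (F : Type) [Field F] [CharP F 2] : (MonoidAlgebra F QD16)ˣ :=
  Units.map (AeSymmM F) (U3' F)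
noncomputable def U4 (F : Type) [Field F] [CharP F 2] : (MonoidAlgebra F QD16)ˣ :=
  Units.map (AeSymmM F) (U4' F)

theorem Umap1 : Units.map (AeM F) (U1 F) = U1' F := by
  apply Units.ext
  show (Ae F) ((Ae F).symm (ev F um1)) = ev F um1
  exact (Ae F).apply_symm_apply _
theorem Umap2 : Units.map (AeM F) (U2 F) = U2' F := by
  apply Units.ext
  show (Ae F) ((Ae F).symm (ev F um2)) = ev F um2
  exact (Ae F).apply_symm_apply _
theorem Umap3 : Units.map (AeM F) (U3 F) = U3' F := by
  apply Units.ext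
  show (Ae F) ((Ae F).symm (ev F um3)) = ev F um3
  exact (Ae F).apply_symm_apply _
theorem Umap4 : Units.map (AeM F) (U4 F) = U4' F := by
  apply Units.ext
  show (Ae F) ((Ae F).symm (ev F um4)) = ev F um4
  exact (Ae F).apply_symm_apply _

theorem Umem_aux {um : ℕ} (hred : red B0 (um ^^^ 1) = 0) {u : MonoidAlgebra F QD16}
    (hu : (Ae F) u = ev F um) :
    u - 1 ∈ (⊥ : Ideal (MonoidAlgebra F QD16)).jacobson := by
  apply jac_of_mem_M0
  have : (Ae F) (u - 1) = ev F (um ^^^ 1) := by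
    rw [map_sub, map_one, hu, ev_xor, ev_one, char2_sub]
  rw [this]
  exact red_zero_mem (fun q hq => mem_Mspan hq) hred

theorem U1mem : ((U1 F : (MonoidAlgebra F QD16)ˣ) : MonoidAlgebra F QD16) - 1
    ∈ (⊥ : Ideal (MonoidAlgebra F QD16)).jacobson :=
  Umem_aux wfact_mem.1 ((Ae F).apply_symm_apply _)
theorem U2mem : ((U2 F : (MonoidAlgebra F QD16)ˣ) : MonoidAlgebra F QD16) - 1
    ∈ (⊥ : Ideal (MonoidAlgebra F QD16)).jacobson :=
  Umem_aux wfact_mem.2.1 ((Ae F).apply_symm_apply _)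
theorem U3mem : ((U3 F : (MonoidAlgebra F QD16)ˣ) : MonoidAlgebra F QD16) - 1
    ∈ (⊥ : Ideal (MonoidAlgebra F QD16)).jacobson :=
  Umem_aux wfact_mem.2.2.1 ((Ae F).apply_symm_apply _)
theorem U4mem : ((U4 F : (MonoidAlgebra F QD16)ˣ) : MonoidAlgebra F QD16) - 1
    ∈ (⊥ : Ideal (MonoidAlgebra F QD16)).jacobson :=
  Umem_aux wfact_mem.2.2.2 ((Ae F).apply_symm_apply _)

theorem U1'v : ((U1' F : (MonoidAlgebra F G0)ˣ) : MonoidAlgebra F G0) = ev F um1 := rfl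
theorem U2'v : ((U2' F : (MonoidAlgebra F G0)ˣ) : MonoidAlgebra F G0) = ev F um2 := rfl
theorem U3'v : ((U3' F : (MonoidAlgebra F G0)ˣ) : MonoidAlgebra F G0) = ev F um3 := rfl
theorem U4'v : ((U4' F : (MonoidAlgebra F G0)ˣ) : MonoidAlgebra F G0) = ev F um4 := rfl
theorem U1'iv : (((U1' F)⁻¹ : (MonoidAlgebra F G0)ˣ) : MonoidAlgebra F G0) = ev F vm1 := rfl
theorem U2'iv : (((U2' F)⁻¹ : (MonoidAlgebra F G0)ˣ) : MonoidAlgebra F G0) = ev F vm2 := rfl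
theorem U3'iv : (((U3' F)⁻¹ : (MonoidAlgebra F G0)ˣ) : MonoidAlgebra F G0) = ev F vm3 := rfl
theorem U4'iv : (((U4' F)⁻¹ : (MonoidAlgebra F G0)ˣ) : MonoidAlgebra F G0) = ev F vm4 := rfl

set_option maxHeartbeats 1000000 in
theorem zval : ((⁅⁅U1' F, U2' F⁆, U3' F⁆ : (MonoidAlgebra F G0)ˣ) : MonoidAlgebra F G0)
    = ev F z3m := by
  simp only [commutatorElement_def, mul_inv_rev, inv_inv, Units.val_mul,
    U1'v, U2'v, U3'v, U1'iv, U2'iv, U3'iv, ← ev_mulN]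
  congr 1

theorem units_ne : ⁅⁅⁅U1' F, U2' F⁆, U3' F⁆, U4' F⁆ ≠ (1 : (MonoidAlgebra F G0)ˣ) := by
  intro h
  rw [commutatorElement_eq_one_iff_mul_comm] at h
  have hval := congrArg (Units.val) h
  rw [Units.val_mul, Units.val_mul, zval] at hval
  have h4 : ((U4' F : (MonoidAlgebra F G0)ˣ) : MonoidAlgebra F G0) = ev F um4 := rfl
  rw [h4, ← ev_mulN, ← ev_mulN] at hval
  have happ := congrArg (fun r : MonoidAlgebra F G0 => r.coeff (gi 15)) hval
  simp only [ev_apply (show (15:ℕ) < 16 by norm_num)] at happ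
  rw [wfact_ne.1, wfact_ne.2, if_pos rfl] at happ
  simp at happ

end Witness

/-- `V = 1 + J(F_q[QD_16])` is nilpotent of class exactly 4: in the paper's indexing
`γ₅(V) = 1` but `γ₄(V) ≠ 1`, which corresponds to `lowerCentralSeries V 4 = ⊥` and
`lowerCentralSeries V 3 ≠ ⊥` in Mathlib's indexing (`lowerCentralSeries V 0 = ⊤`). -/
theorem oneAddJacobson_nilpotencyClass_QD16 (F : Type) [Field F] [Fintype F] [CharP F 2]
    (n : ℕ) (hn : 0 < n) (hq : Fintype.card F = 2 ^ n)
    (V : Subgroup (MonoidAlgebra F QD16)ˣ)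
    (hV : ∀ u : (MonoidAlgebra F QD16)ˣ,
      u ∈ V ↔ (u : MonoidAlgebra F QD16) - 1 ∈ (⊥ : Ideal (MonoidAlgebra F QD16)).jacobson) :
    lowerCentralSeries V 4 = ⊥ ∧ lowerCentralSeries V 3 ≠ ⊥ := by
  have hl0 := mul_mem_left_of_facts (F := F) (fun p hp g hg => (fact0 p hp g hg).1)
  have hl1 := mul_mem_left_of_facts (F := F) (fun p hp g hg => (fact1 p hp g hg).1)
  have hl2 := mul_mem_left_of_facts (F := F) (fun p hp g hg => (fact2 p hp g hg).1)
  have hl3 := mul_mem_left_of_facts (F := F) (fun p hp g hg => (fact3 p hp g hg).1)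
  have hl4 := mul_mem_left_of_facts (F := F) (L := B4)
    (fun p hp g hg => by simp [B4] at hp)
  have hr1 := mul_mem_right_of_facts (F := F) (fun p hp g hg => (fact1 p hp g hg).2.1)
  have hr2 := mul_mem_right_of_facts (F := F) (fun p hp g hg => (fact2 p hp g hg).2.1)
  have hr3 := mul_mem_right_of_facts (F := F) (fun p hp g hg => (fact3 p hp g hg).2.1)
  have hr4 := mul_mem_right_of_facts (F := F) (L := B4)
    (fun p hp g hg => by simp [B4] at hp)
  have hbr0 := bracket_mem_of_facts (F := F) (fun p hp g hg => (fact0 p hp g hg).2.2)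
  have hbr1 := bracket_mem_of_facts (F := F) (fun p hp g hg => (fact1 p hp g hg).2.2)
  have hbr2 := bracket_mem_of_facts (F := F) (fun p hp g hg => (fact2 p hp g hg).2.2)
  have hbr3 := bracket_mem_of_facts (F := F) (fun p hp g hg => (fact3 p hp g hg).2.2)
  constructor
  · -- nilpotency class at most 4
    have h0 : Subgroup.lowerCentralSeries (⊤ : Subgroup ↥V) 0 ≤ Hsub V B0 hl0 := by
      rw [lowerCentralSeries_zero]
      intro u _
      show (Ae F) (theta V u) - 1 ∈ Mspan F B0
      have hjac := (hV ↑u).mp u.2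
      have := mem_M0_of_jac hjac
      rwa [map_sub, map_one] at this
    have h1 := lcs_step V hl0 hl1 hr1 hbr0 0 h0
    have h2 := lcs_step V hl1 hl2 hr2 hbr1 1 h1
    have h3 := lcs_step V hl2 hl3 hr3 hbr2 2 h2
    have h4 := lcs_step V hl3 hl4 hr4 hbr3 3 h3
    change Subgroup.lowerCentralSeries V 4 = ⊥
    rw [← Subgroup.top_subtype_lowerCentralSeries, Subgroup.map_eq_bot_iff_of_injective (hf := V.subtype_injective)]
    rw [eq_bot_iff]
    intro u hu
    have hmem : (Ae F) (theta V u) - 1 ∈ Mspan F B4 := h4 hu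
    rw [show B4 = ([] : List (ℕ × ℕ)) from rfl, Mspan_nil_eq_bot, Submodule.mem_bot,
      sub_eq_zero] at hmem
    have hth : theta V u = 1 := (Ae F).injective (by rw [hmem, map_one])
    exact Subgroup.mem_bot.mpr (Subtype.ext (Units.ext hth))
  · -- nilpotency class at least 4
    change Subgroup.lowerCentralSeries V 3 ≠ ⊥
    rw [← Subgroup.top_subtype_lowerCentralSeries, ne_eq, Subgroup.map_eq_bot_iff_of_injective (hf := V.subtype_injective)]
    intro hbot
    set u1 : ↥V := ⟨U1 F, (hV _).mpr U1mem⟩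
    set u2 : ↥V := ⟨U2 F, (hV _).mpr U2mem⟩
    set u3 : ↥V := ⟨U3 F, (hV _).mpr U3mem⟩
    set u4 : ↥V := ⟨U4 F, (hV _).mpr U4mem⟩
    have e1 : ⁅u1, u2⁆ ∈ Subgroup.lowerCentralSeries (⊤ : Subgroup ↥V) 1 := by
      rw [lowerCentralSeries_succ]
      exact Subgroup.commutator_mem_commutator
        (by rw [lowerCentralSeries_zero]; trivial) (Subgroup.mem_top _)
    have e2 : ⁅⁅u1, u2⁆, u3⁆ ∈ Subgroup.lowerCentralSeries (⊤ : Subgroup ↥V) 2 := by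
      rw [lowerCentralSeries_succ]
      exact Subgroup.commutator_mem_commutator e1 (Subgroup.mem_top _)
    have e3 : ⁅⁅⁅u1, u2⁆, u3⁆, u4⁆ ∈ Subgroup.lowerCentralSeries (⊤ : Subgroup ↥V) 3 := by
      rw [lowerCentralSeries_succ]
      exact Subgroup.commutator_mem_commutator e2 (Subgroup.mem_top _)
    rw [hbot, Subgroup.mem_bot] at e3
    -- push the equality down to `R2ˣ`
    have eu : (⁅⁅⁅U1 F, U2 F⁆, U3 F⁆, U4 F⁆ : (MonoidAlgebra F QD16)ˣ) = 1 := by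
      have h' := congrArg V.subtype e3
      rw [map_commutatorElement, map_commutatorElement, map_commutatorElement, map_one] at h'
      exact h'
    have eu2 : (⁅⁅⁅U1' F, U2' F⁆, U3' F⁆, U4' F⁆ : (MonoidAlgebra F G0)ˣ) = 1 := by
      have := congrArg (Units.map (AeM F)) eu
      rwa [map_commutatorElement, map_commutatorElement, map_commutatorElement,
        Umap1, Umap2, Umap3, Umap4, map_one] at this
    exact units_ne eu2
end

section
/- Let F_q be a finite field of characteristic 2 with q = 2^n elements. Then the unit group U(F_q[QD_16]) is centrally metabelian; that is, its second derived subgroup U(F_q[QD_16])'' is contained in the center of U(F_q[QD_16]). -/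
namespace QD16aux

/-! ### Group-theoretic facts about `QD16` -/

def π : FreeGroup (Fin 2) →* QD16 := PresentedGroup.mk (qdRels 4)

def A : QD16 := PresentedGroup.of 0
def X : QD16 := PresentedGroup.of 1

lemma rel_one {r : FreeGroup (Fin 2)} (h : r ∈ qdRels 4) : π r = 1 := by
  have : r ∈ Subgroup.normalClosure (qdRels 4) := Subgroup.subset_normalClosure h
  exact (QuotientGroup.eq_one_iff r).mpr this

lemma hA8 : A ^ 8 = 1 := by
  have h := rel_one (r := FreeGroup.of 0 ^ (2 ^ (4 - 1))) (by left; rfl)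
  rw [map_pow] at h
  norm_num at h
  exact h

lemma hX2 : X ^ 2 = 1 := by
  have h := rel_one (r := FreeGroup.of 1 ^ 2) (by right; left; rfl)
  rw [map_pow] at h
  exact h

lemma hXAX : X * A * X = A ^ 3 := by
  have h := rel_one (r := FreeGroup.of 1 * FreeGroup.of 0 * FreeGroup.of 1 *
      (FreeGroup.of 0 ^ (2 ^ (4 - 2) - 1))⁻¹) (by right; right; rfl)
  simp only [map_mul, map_inv, map_pow] at h
  norm_num at h
  rw [mul_inv_eq_one] at h
  exact h

lemma hXinv : X⁻¹ = X := by
  rw [← mul_eq_one_iff_inv_eq, ← pow_two, hX2]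

lemma hXA : X * A = A ^ 3 * X := by
  have h := hXAX
  calc X * A = X * A * X * X⁻¹ := by group
    _ = A ^ 3 * X := by rw [h, hXinv]

lemma qd_induction (P : QD16 → Prop) (h1 : P 1) (hA : P A) (hX : P X)
    (hmul : ∀ g h, P g → P h → P (g * h)) (hinv : ∀ g, P g → P g⁻¹) : ∀ g, P g := by
  intro g
  obtain ⟨w, rfl⟩ : ∃ w, π w = g := QuotientGroup.mk'_surjective _ g
  induction w using FreeGroup.induction_on with
  | C1 => simpa using h1
  | of i =>
      fin_cases i
      · exact hA
      · exact hX
  | inv_of i h => rw [map_inv]; exact hinv _ h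
  | mul u v hu hv => rw [map_mul]; exact hmul _ _ hu hv

/-! ### The group algebra -/

variable (F : Type) [Field F] [CharP F 2]

abbrev R : Type := MonoidAlgebra F QD16

noncomputable def σ : QD16 →* R F := MonoidAlgebra.of F QD16

instance : CharP (R F) 2 := charP_of_injective_algebraMap' F 2

noncomputable def a : R F := σ F A
noncomputable def x : R F := σ F X
noncomputable def c : R F := 1 + a F ^ 2
noncomputable def d : R F := 1 + a F ^ 4
noncomputable def u : R F := 1 + a F ^ 2 + a F ^ 4
noncomputable def v : R F := 1 + a F ^ 4 + a F ^ 6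
noncomputable def e : R F := 1 + a F ^ 2 + a F ^ 4 + a F ^ 6

variable {F}

set_option linter.unusedSectionVars false

lemma two_z (z : R F) : z + z = 0 := CharTwo.add_self_eq_zero z

lemma ha8 : a F ^ 8 = 1 := by
  rw [a, ← map_pow, hA8, map_one]

lemma hx2 : x F * x F = 1 := by
  rw [x, ← map_mul, ← pow_two, hX2, map_one]

lemma hxa : x F * a F = a F ^ 3 * x F := by
  rw [x, a, ← map_mul, ← map_pow, ← map_mul, hXA]

lemma hxa2 : x F * a F ^ 2 = a F ^ 6 * x F := by
  have h : x F * a F ^ 2 = (x F * a F) * a F := by noncomm_ring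
  rw [h, hxa, mul_assoc, hxa]
  noncomm_ring

lemma hxa4 : x F * a F ^ 4 = a F ^ 4 * x F := by
  have h : x F * a F ^ 4 = (x F * a F ^ 2) * a F ^ 2 := by noncomm_ring
  rw [h, hxa2, mul_assoc, hxa2]
  have h2 : a F ^ 6 * (a F ^ 6 * x F) = a F ^ 8 * (a F ^ 4 * x F) := by noncomm_ring
  rw [h2, ha8, one_mul]

lemma hxa6 : x F * a F ^ 6 = a F ^ 2 * x F := by
  have h : x F * a F ^ 6 = (x F * a F ^ 4) * a F ^ 2 := by noncomm_ring
  rw [h, hxa4, mul_assoc, hxa2]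
  have h2 : a F ^ 4 * (a F ^ 6 * x F) = a F ^ 8 * (a F ^ 2 * x F) := by noncomm_ring
  rw [h2, ha8, one_mul]

/-! ### Polynomial identities in `a` -/

lemma hcu : c F * u F = 1 + a F ^ 6 := by
  have h : c F * u F = 1 + a F ^ 6 + (a F ^ 2 + a F ^ 2) + (a F ^ 4 + a F ^ 4) := by
    unfold c u; noncomm_ring
  rw [h, two_z, two_z, add_zero, add_zero]

lemma hcc : c F * c F = d F := by
  have h : c F * c F = d F + (a F ^ 2 + a F ^ 2) := by unfold c d; noncomm_ring
  rw [h, two_z, add_zero]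

lemma hdc : d F * c F = e F := by unfold c d e; noncomm_ring

lemma huv : u F * v F = 1 := by
  have h : u F * v F = 1 + (a F ^ 2 + a F ^ 8 * a F ^ 2) + ((a F ^ 4 + a F ^ 4) +
      ((a F ^ 6 + a F ^ 6) + (a F ^ 8 + a F ^ 8))) := by unfold u v; noncomm_ring
  rw [h, ha8, one_mul, two_z, two_z, two_z, two_z, add_zero, add_zero, add_zero, add_zero]

lemma hdu : d F * u F = a F ^ 2 * d F := by
  have h : d F * u F = a F ^ 2 * d F + ((1 + a F ^ 8) + (a F ^ 4 + a F ^ 4)) := by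
    unfold d u; noncomm_ring
  rw [h, ha8, two_z, two_z, zero_add, add_zero]

lemma hdv : d F * v F = a F ^ 2 * d F := by
  have h : d F * v F = (a F ^ 8 * a F ^ 2 + a F ^ 6) + ((1 + a F ^ 8) + (a F ^ 4 + a F ^ 4)) := by
    unfold d v; noncomm_ring
  rw [h]
  simp only [ha8, one_mul, two_z, add_zero, zero_add]
  unfold d; noncomm_ring

lemma hec : e F * c F = 0 := by
  have h : e F * c F = (1 + a F ^ 8) + ((a F ^ 2 + a F ^ 2) + ((a F ^ 4 + a F ^ 4) +
      (a F ^ 6 + a F ^ 6))) := by unfold e c; noncomm_ring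
  rw [h]
  simp only [ha8, two_z, add_zero, zero_add]

lemma hcuv : c F * u F * v F = c F := by rw [mul_assoc, huv, mul_one]

/-! ### Conjugation identities with `x` -/

lemma hxc : x F * c F = c F * u F * x F := by
  have h : x F * c F = x F + x F * a F ^ 2 := by unfold c; noncomm_ring
  rw [h, hxa2, hcu]
  noncomm_ring

lemma hxu : x F * u F = v F * x F := by
  have h : x F * u F = x F + x F * a F ^ 2 + x F * a F ^ 4 := by unfold u; noncomm_ring
  rw [h, hxa2, hxa4]
  unfold v; noncomm_ring

lemma hxv : x F * v F = u F * x F := by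
  have h : x F * v F = x F + x F * a F ^ 4 + x F * a F ^ 6 := by unfold v; noncomm_ring
  rw [h, hxa4, hxa6]
  unfold u; noncomm_ring

lemma hxd : x F * d F = d F * x F := by
  have h : x F * d F = x F + x F * a F ^ 4 := by unfold d; noncomm_ring
  rw [h, hxa4]
  unfold d; noncomm_ring

lemma hxe : x F * e F = e F * x F := by
  have h : x F * e F = x F + x F * a F ^ 2 + x F * a F ^ 4 + x F * a F ^ 6 := by
    unfold e; noncomm_ring
  rw [h, hxa2, hxa4, hxa6]
  unfold e; noncomm_ring

/-! ### Centrality of `d` and `e` -/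

lemma sigma_inv_mul (g : QD16) : σ F g⁻¹ * σ F g = 1 := by
  rw [← map_mul, inv_mul_cancel, map_one]

lemma sigma_mul_inv (g : QD16) : σ F g * σ F g⁻¹ = 1 := by
  rw [← map_mul, mul_inv_cancel, map_one]

lemma conj_inv {g : QD16} {z w : R F} (h : σ F g * z = w * σ F g) :
    σ F g⁻¹ * w = z * σ F g⁻¹ := by
  calc σ F g⁻¹ * w = σ F g⁻¹ * w * (σ F g * σ F g⁻¹) := by rw [sigma_mul_inv, mul_one]
    _ = σ F g⁻¹ * (w * σ F g) * σ F g⁻¹ := by noncomm_ring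
    _ = σ F g⁻¹ * (σ F g * z) * σ F g⁻¹ := by rw [h]
    _ = (σ F g⁻¹ * σ F g) * (z * σ F g⁻¹) := by noncomm_ring
    _ = z * σ F g⁻¹ := by rw [sigma_inv_mul, one_mul]

lemma central_of_comm {z : R F} (hA : σ F A * z = z * σ F A) (hX : σ F X * z = z * σ F X) :
    ∀ r : R F, r * z = z * r := by
  have hg : ∀ g : QD16, σ F g * z = z * σ F g := by
    refine qd_induction _ ?_ hA hX ?_ ?_
    · simp
    · intro g h hgz hhz
      rw [map_mul, mul_assoc, hhz, ← mul_assoc, hgz, mul_assoc]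
    · intro g hgz
      exact conj_inv hgz
  intro r
  induction r using MonoidAlgebra.induction_on with
  | of g => exact hg g
  | add f g hf hg => rw [add_mul, mul_add, hf, hg]
  | smul t f hf => rw [smul_mul_assoc, mul_smul_comm, hf]

lemma d_comm : ∀ r : R F, r * d F = d F * r := by
  refine central_of_comm ?_ ?_
  · show a F * d F = d F * a F
    unfold d; noncomm_ring
  · exact hxd

lemma e_comm : ∀ r : R F, r * e F = e F * r := by
  refine central_of_comm ?_ ?_
  · show a F * e F = e F * a F
    unfold e; noncomm_ring
  · exact hxe

/-! ### The conjugation type lemma -/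

lemma conj_mul {g : QD16} {z₁ z₂ w₁ w₂ : R F} (h₁ : σ F g * z₁ = w₁ * σ F g)
    (h₂ : σ F g * z₂ = w₂ * σ F g) : σ F g * (z₁ * z₂) = (w₁ * w₂) * σ F g := by
  calc σ F g * (z₁ * z₂) = (σ F g * z₁) * z₂ := by rw [mul_assoc]
    _ = w₁ * (σ F g * z₂) := by rw [h₁, mul_assoc]
    _ = w₁ * (w₂ * σ F g) := by rw [h₂]
    _ = (w₁ * w₂) * σ F g := by rw [mul_assoc]

abbrev T0 (g : QD16) : Prop :=
  σ F g * c F = c F * σ F g ∧ σ F g * u F = u F * σ F g ∧ σ F g * v F = v F * σ F g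

abbrev T1 (g : QD16) : Prop :=
  σ F g * c F = c F * u F * σ F g ∧ σ F g * u F = v F * σ F g ∧ σ F g * v F = u F * σ F g

lemma TT : ∀ g : QD16, T0 (F := F) g ∨ T1 (F := F) g := by
  refine qd_induction _ ?_ ?_ ?_ ?_ ?_
  · left
    refine ⟨?_, ?_, ?_⟩ <;> simp
  · left
    have ha : σ F A = a F := rfl
    refine ⟨?_, ?_, ?_⟩ <;> rw [ha] <;> simp only [c, u, v] <;> noncomm_ring
  · right
    have hx : σ F X = x F := rfl
    exact ⟨by rw [hx, hxc], by rw [hx, hxu], by rw [hx, hxv]⟩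
  · rintro g h (⟨g1, g2, g3⟩ | ⟨g1, g2, g3⟩) (⟨h1, h2, h3⟩ | ⟨h1, h2, h3⟩)
    · left
      refine ⟨?_, ?_, ?_⟩ <;> rw [map_mul]
      · rw [mul_assoc, h1, ← mul_assoc, g1, mul_assoc]
      · rw [mul_assoc, h2, ← mul_assoc, g2, mul_assoc]
      · rw [mul_assoc, h3, ← mul_assoc, g3, mul_assoc]
    · right
      refine ⟨?_, ?_, ?_⟩ <;> rw [map_mul]
      · have key : σ F g * (c F * u F) = c F * u F * σ F g := conj_mul g1 g2
        rw [mul_assoc, h1, ← mul_assoc, key, mul_assoc]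
      · rw [mul_assoc, h2, ← mul_assoc, g3, mul_assoc]
      · rw [mul_assoc, h3, ← mul_assoc, g2, mul_assoc]
    · right
      refine ⟨?_, ?_, ?_⟩ <;> rw [map_mul]
      · have key : σ F g * c F = c F * u F * σ F g := g1
        rw [mul_assoc, h1, ← mul_assoc, key, mul_assoc]
      · rw [mul_assoc, h2, ← mul_assoc, g2, mul_assoc]
      · rw [mul_assoc, h3, ← mul_assoc, g3, mul_assoc]
    · left
      refine ⟨?_, ?_, ?_⟩ <;> rw [map_mul]
      · have key : σ F g * (c F * u F) = c F * σ F g := by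
          have k := conj_mul g1 g2
          rwa [hcuv] at k
        rw [mul_assoc, h1, ← mul_assoc, key, mul_assoc]
      · rw [mul_assoc, h2, ← mul_assoc, g3, mul_assoc]
      · rw [mul_assoc, h3, ← mul_assoc, g2, mul_assoc]
  · rintro g (⟨g1, g2, g3⟩ | ⟨g1, g2, g3⟩)
    · left
      exact ⟨conj_inv g1, conj_inv g2, conj_inv g3⟩
    · right
      have k1 : σ F g⁻¹ * (c F * u F) = c F * σ F g⁻¹ := conj_inv g1
      have k2 : σ F g⁻¹ * v F = u F * σ F g⁻¹ := conj_inv g2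
      have k3 : σ F g⁻¹ * u F = v F * σ F g⁻¹ := conj_inv g3
      refine ⟨?_, k3, k2⟩
      calc σ F g⁻¹ * c F = σ F g⁻¹ * (c F * u F * v F) := by rw [hcuv]
        _ = σ F g⁻¹ * (c F * u F) * v F := by rw [← mul_assoc]
        _ = c F * (σ F g⁻¹ * v F) := by rw [k1, mul_assoc]
        _ = c F * (u F * σ F g⁻¹) := by rw [k2]
        _ = c F * u F * σ F g⁻¹ := by rw [mul_assoc]

lemma cgc (g : QD16) :
    c F * σ F g * c F = d F * σ F g ∨ c F * σ F g * c F = d F * (a F ^ 2 * σ F g) := by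
  rcases TT (F := F) g with ⟨g1, -, -⟩ | ⟨g1, -, -⟩
  · left
    rw [mul_assoc, g1, ← mul_assoc, hcc]
  · right
    rw [mul_assoc, g1, ← mul_assoc, ← mul_assoc, hcc, hdu]
    have : a F ^ 2 * d F = d F * a F ^ 2 := d_comm _
    rw [this, mul_assoc]

/-! ### The submodules `II = c·R` and `EE = e·R` -/

variable (F) in
noncomputable def II : Submodule F (R F) := Submodule.span F (Set.range fun g => c F * σ F g)

variable (F) in
noncomputable def EE : Submodule F (R F) := Submodule.span F (Set.range fun g => e F * σ F g)

lemma c_mul_mem (r : R F) : c F * r ∈ II F := by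
  induction r using MonoidAlgebra.induction_on with
  | of g => exact Submodule.subset_span ⟨g, rfl⟩
  | add f g hf hg => rw [mul_add]; exact add_mem hf hg
  | smul t f hf => rw [mul_smul_comm]; exact Submodule.smul_mem _ _ hf

lemma e_mul_mem (r : R F) : e F * r ∈ EE F := by
  induction r using MonoidAlgebra.induction_on with
  | of g => exact Submodule.subset_span ⟨g, rfl⟩
  | add f g hf hg => rw [mul_add]; exact add_mem hf hg
  | smul t f hf => rw [mul_smul_comm]; exact Submodule.smul_mem _ _ hf

lemma II_rmul {z : R F} (hz : z ∈ II F) (r : R F) : z * r ∈ II F := by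
  induction hz using Submodule.span_induction with
  | mem w hw =>
      obtain ⟨g, rfl⟩ := hw
      rw [mul_assoc]
      exact c_mul_mem _
  | zero => rw [zero_mul]; exact zero_mem _
  | add w₁ w₂ h1 h2 hw1 hw2 => rw [add_mul]; exact add_mem hw1 hw2
  | smul t w hw hmem => rw [smul_mul_assoc]; exact Submodule.smul_mem _ _ hmem

lemma EE_rmul {z : R F} (hz : z ∈ EE F) (r : R F) : z * r ∈ EE F := by
  induction hz using Submodule.span_induction with
  | mem w hw =>
      obtain ⟨g, rfl⟩ := hw
      rw [mul_assoc]
      exact e_mul_mem _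
  | zero => rw [zero_mul]; exact zero_mem _
  | add w₁ w₂ h1 h2 hw1 hw2 => rw [add_mul]; exact add_mem hw1 hw2
  | smul t w hw hmem => rw [smul_mul_assoc]; exact Submodule.smul_mem _ _ hmem

lemma mul_c_mem (r : R F) : r * c F ∈ II F := by
  induction r using MonoidAlgebra.induction_on with
  | of g =>
      show σ F g * c F ∈ II F
      rcases TT (F := F) g with ⟨g1, -, -⟩ | ⟨g1, -, -⟩
      · rw [g1]; exact Submodule.subset_span ⟨g, rfl⟩
      · rw [g1, mul_assoc]
        exact c_mul_mem _
  | add f g hf hg => rw [add_mul]; exact add_mem hf hg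
  | smul t f hf => rw [smul_mul_assoc]; exact Submodule.smul_mem _ _ hf

lemma II_lmul {z : R F} (hz : z ∈ II F) (r : R F) : r * z ∈ II F := by
  induction hz using Submodule.span_induction with
  | mem w hw =>
      obtain ⟨g, rfl⟩ := hw
      rw [← mul_assoc]
      exact II_rmul (mul_c_mem r) _
  | zero => rw [mul_zero]; exact zero_mem _
  | add w₁ w₂ h1 h2 hw1 hw2 => rw [mul_add]; exact add_mem hw1 hw2
  | smul t w hw hmem => rw [mul_smul_comm]; exact Submodule.smul_mem _ _ hmem

lemma EE_lmul {z : R F} (hz : z ∈ EE F) (r : R F) : r * z ∈ EE F := by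
  induction hz using Submodule.span_induction with
  | mem w hw =>
      obtain ⟨g, rfl⟩ := hw
      rw [← mul_assoc, e_comm r, mul_assoc]
      exact e_mul_mem _
  | zero => rw [mul_zero]; exact zero_mem _
  | add w₁ w₂ h1 h2 hw1 hw2 => rw [mul_add]; exact add_mem hw1 hw2
  | smul t w hw hmem => rw [mul_smul_comm]; exact Submodule.smul_mem _ _ hmem

/-! ### Bilinear induction for symmetrized products -/

lemma bilin_ind (M : Submodule F (R F)) (hMl : ∀ w ∈ M, ∀ r : R F, r * w ∈ M)
    (hMr : ∀ w ∈ M, ∀ r : R F, w * r ∈ M) (z : R F)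
    (hA : z * a F + a F * z ∈ M) (hX : z * x F + x F * z ∈ M) :
    ∀ h : QD16, z * σ F h + σ F h * z ∈ M := by
  refine qd_induction _ ?_ hA hX ?_ ?_
  · have : z * σ F 1 + σ F 1 * z = 0 := by
      rw [map_one, mul_one, one_mul, two_z]
    rw [this]; exact zero_mem _
  · intro g h hg hh
    have key : z * σ F (g * h) + σ F (g * h) * z =
        σ F g * (z * σ F h + σ F h * z) + (z * σ F g + σ F g * z) * σ F h := by
      rw [map_mul]
      noncomm_ring
      simp [two_smul, CharTwo.add_self_eq_zero]
    rw [key]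
    exact add_mem (hMl _ hh _) (hMr _ hg _)
  · intro g hg
    have key : z * σ F g⁻¹ + σ F g⁻¹ * z =
        σ F g⁻¹ * ((z * σ F g + σ F g * z) * σ F g⁻¹) := by
      have expand : σ F g⁻¹ * ((z * σ F g + σ F g * z) * σ F g⁻¹) =
          (σ F g⁻¹ * z) * (σ F g * σ F g⁻¹) + (σ F g⁻¹ * σ F g) * (z * σ F g⁻¹) := by
        noncomm_ring
      rw [expand, sigma_mul_inv, sigma_inv_mul, mul_one, one_mul, add_comm]
    rw [key]
    exact hMl _ (hMr _ hg _) _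

lemma ext2 (M : Submodule F (R F)) (H : ∀ g h : QD16, σ F g * σ F h + σ F h * σ F g ∈ M) :
    ∀ r s : R F, r * s + s * r ∈ M := by
  have step : ∀ (g : QD16) (s : R F), σ F g * s + s * σ F g ∈ M := by
    intro g s
    induction s using MonoidAlgebra.induction_on with
    | of h => exact H g h
    | add f₁ f₂ h1 h2 =>
        have : σ F g * (f₁ + f₂) + (f₁ + f₂) * σ F g =
            (σ F g * f₁ + f₁ * σ F g) + (σ F g * f₂ + f₂ * σ F g) := by noncomm_ring
        rw [this]; exact add_mem h1 h2
    | smul t f hf =>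
        have : σ F g * (t • f) + (t • f) * σ F g = t • (σ F g * f + f * σ F g) := by
          rw [mul_smul_comm, smul_mul_assoc, smul_add]
        rw [this]; exact Submodule.smul_mem _ _ hf
  intro r s
  induction r using MonoidAlgebra.induction_on with
  | of g => exact step g s
  | add f₁ f₂ h1 h2 =>
      have : (f₁ + f₂) * s + s * (f₁ + f₂) = (f₁ * s + s * f₁) + (f₂ * s + s * f₂) := by
        noncomm_ring
      rw [this]; exact add_mem h1 h2
  | smul t f hf =>
      have : (t • f) * s + s * (t • f) = t • (f * s + s * f) := by
        rw [mul_smul_comm, smul_mul_assoc, smul_add]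
      rw [this]; exact Submodule.smul_mem _ _ hf

/-! ### `E` consists of central elements -/

variable (F) in
noncomputable def Me : Submodule F (R F) where
  carrier := {z | e F * z = 0}
  add_mem' := by
    intro z w hz hw
    simp only [Set.mem_setOf_eq] at *
    rw [mul_add, hz, hw, add_zero]
  zero_mem' := by simp
  smul_mem' := by
    intro t z hz
    simp only [Set.mem_setOf_eq] at *
    rw [mul_smul_comm, hz, smul_zero]

lemma Me_lmul : ∀ w ∈ Me F, ∀ r : R F, r * w ∈ Me F := by
  intro w hw r
  show e F * (r * w) = 0
  rw [← mul_assoc, ← e_comm r, mul_assoc, hw, mul_zero]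

lemma Me_rmul : ∀ w ∈ Me F, ∀ r : R F, w * r ∈ Me F := by
  intro w hw r
  show e F * (w * r) = 0
  rw [← mul_assoc, hw, zero_mul]

lemma axxa : a F * x F + x F * a F = c F * σ F (A * X) := by
  have hax : σ F (A * X) = a F * x F := by rw [map_mul]; rfl
  rw [hax, hxa]
  unfold c; noncomm_ring

lemma baseA_Me : ∀ h : QD16, a F * σ F h + σ F h * a F ∈ Me F := by
  refine bilin_ind (Me F) Me_lmul Me_rmul (a F) ?_ ?_
  · show e F * (a F * a F + a F * a F) = 0
    rw [two_z, mul_zero]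
  · show e F * (a F * x F + x F * a F) = 0
    rw [axxa, ← mul_assoc, hec, zero_mul]

lemma baseX_Me : ∀ h : QD16, x F * σ F h + σ F h * x F ∈ Me F := by
  refine bilin_ind (Me F) Me_lmul Me_rmul (x F) ?_ ?_
  · show e F * (x F * a F + a F * x F) = 0
    rw [add_comm, axxa, ← mul_assoc, hec, zero_mul]
  · show e F * (x F * x F + x F * x F) = 0
    rw [two_z, mul_zero]

lemma e_master : ∀ r s : R F, e F * (r * s + s * r) = 0 := by
  have base : ∀ g h : QD16, σ F g * σ F h + σ F h * σ F g ∈ Me F := by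
    intro g
    refine bilin_ind (Me F) Me_lmul Me_rmul (σ F g) ?_ ?_
    · have h := baseA_Me (F := F) g
      rwa [add_comm] at h
    · have h := baseX_Me (F := F) g
      rwa [add_comm] at h
  exact fun r s => ext2 (Me F) base r s

lemma EE_central {z : R F} (hz : z ∈ EE F) (r : R F) : z * r = r * z := by
  induction hz using Submodule.span_induction with
  | mem w hw =>
      obtain ⟨g, rfl⟩ := hw
      have key : e F * (σ F g * r) = e F * (r * σ F g) := by
        have h3 := e_master (σ F g) r
        rw [mul_add] at h3
        rw [add_eq_zero_iff_eq_neg, CharTwo.neg_eq] at h3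
        exact h3
      calc (e F * σ F g) * r = e F * (σ F g * r) := by rw [mul_assoc]
        _ = e F * (r * σ F g) := key
        _ = (e F * r) * σ F g := by rw [mul_assoc]
        _ = (r * e F) * σ F g := by rw [e_comm r]
        _ = r * (e F * σ F g) := by rw [mul_assoc]
  | zero => rw [zero_mul, mul_zero]
  | add w₁ w₂ h1 h2 hw1 hw2 => rw [add_mul, mul_add, hw1, hw2]
  | smul t w hw hmem => rw [smul_mul_assoc, mul_smul_comm, hmem]

/-! ### All ring commutators lie in `II` -/

lemma baseA_II : ∀ h : QD16, a F * σ F h + σ F h * a F ∈ II F := by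
  refine bilin_ind (II F) (fun w hw r => II_lmul hw r) (fun w hw r => II_rmul hw r) (a F) ?_ ?_
  · rw [two_z]; exact zero_mem _
  · rw [axxa]; exact Submodule.subset_span ⟨A * X, rfl⟩

lemma baseX_II : ∀ h : QD16, x F * σ F h + σ F h * x F ∈ II F := by
  refine bilin_ind (II F) (fun w hw r => II_lmul hw r) (fun w hw r => II_rmul hw r) (x F) ?_ ?_
  · rw [add_comm, axxa]; exact Submodule.subset_span ⟨A * X, rfl⟩
  · rw [two_z]; exact zero_mem _

lemma full_comm_II : ∀ r s : R F, r * s + s * r ∈ II F := by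
  refine ext2 (II F) ?_
  intro g
  refine bilin_ind (II F) (fun w hw r => II_lmul hw r) (fun w hw r => II_rmul hw r) (σ F g) ?_ ?_
  · have h := baseA_II (F := F) g
    rwa [add_comm] at h
  · have h := baseX_II (F := F) g
    rwa [add_comm] at h

/-! ### Symmetrized products of `II` land in `EE` -/

variable (F) in
noncomputable def Md : Submodule F (R F) where
  carrier := {z | d F * z ∈ EE F}
  add_mem' := by
    intro z w hz hw
    simp only [Set.mem_setOf_eq] at *
    rw [mul_add]
    exact add_mem hz hw
  zero_mem' := by simp
  smul_mem' := by
    intro t z hz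
    simp only [Set.mem_setOf_eq] at *
    rw [mul_smul_comm]
    exact Submodule.smul_mem _ _ hz

lemma Md_lmul : ∀ w ∈ Md F, ∀ r : R F, r * w ∈ Md F := by
  intro w hw r
  show d F * (r * w) ∈ EE F
  rw [← mul_assoc, ← d_comm r, mul_assoc]
  exact EE_lmul hw r

lemma Md_rmul : ∀ w ∈ Md F, ∀ r : R F, w * r ∈ Md F := by
  intro w hw r
  show d F * (w * r) ∈ EE F
  rw [← mul_assoc]
  exact EE_rmul hw r

lemma baseA_Md : ∀ h : QD16, a F * σ F h + σ F h * a F ∈ Md F := by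
  refine bilin_ind (Md F) Md_lmul Md_rmul (a F) ?_ ?_
  · show d F * (a F * a F + a F * a F) ∈ EE F
    rw [two_z, mul_zero]; exact zero_mem _
  · show d F * (a F * x F + x F * a F) ∈ EE F
    rw [axxa, ← mul_assoc, hdc]
    exact e_mul_mem _

lemma baseX_Md : ∀ h : QD16, x F * σ F h + σ F h * x F ∈ Md F := by
  refine bilin_ind (Md F) Md_lmul Md_rmul (x F) ?_ ?_
  · show d F * (x F * a F + a F * x F) ∈ EE F
    rw [add_comm, axxa, ← mul_assoc, hdc]
    exact e_mul_mem _
  · show d F * (x F * x F + x F * x F) ∈ EE F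
    rw [two_z, mul_zero]; exact zero_mem _

lemma CP (g h : QD16) : d F * (σ F g * σ F h) + d F * (σ F h * σ F g) ∈ EE F := by
  have key : σ F g * σ F h + σ F h * σ F g ∈ Md F := by
    refine bilin_ind (Md F) Md_lmul Md_rmul (σ F g) ?_ ?_ h
    · have h := baseA_Md (F := F) g
      rwa [add_comm] at h
    · have h := baseX_Md (F := F) g
      rwa [add_comm] at h
  have key2 : d F * (σ F g * σ F h + σ F h * σ F g) ∈ EE F := key
  rwa [mul_add] at key2

lemma BL (g h : QD16) :
    (c F * σ F g) * (c F * σ F h) + (c F * σ F h) * (c F * σ F g) ∈ EE F := by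
  have e1 : (c F * σ F g) * (c F * σ F h) = (c F * σ F g * c F) * σ F h := by noncomm_ring
  have e2 : (c F * σ F h) * (c F * σ F g) = (c F * σ F h * c F) * σ F g := by noncomm_ring
  rw [e1, e2]
  rcases cgc (F := F) g with hg | hg <;> rcases cgc (F := F) h with hh | hh <;> rw [hg, hh]
  · have := CP (F := F) g h
    simpa only [mul_assoc] using this
  · have mem := add_mem (CP (F := F) g h) (e_mul_mem (σ F h * σ F g))
    have key : d F * σ F g * σ F h + d F * (a F ^ 2 * σ F h) * σ F g =
        (d F * (σ F g * σ F h) + d F * (σ F h * σ F g)) + e F * (σ F h * σ F g) := by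
      unfold d e
      noncomm_ring
      simp [two_smul, CharTwo.add_self_eq_zero]
    rw [key]
    exact mem
  · have mem := add_mem (CP (F := F) g h) (e_mul_mem (σ F g * σ F h))
    have key : d F * (a F ^ 2 * σ F g) * σ F h + d F * σ F h * σ F g =
        (d F * (σ F g * σ F h) + d F * (σ F h * σ F g)) + e F * (σ F g * σ F h) := by
      unfold d e
      noncomm_ring
      simp [two_smul, CharTwo.add_self_eq_zero]
    rw [key]
    exact mem
  · have mem := EE_lmul (CP (F := F) g h) (a F ^ 2)
    have key : d F * (a F ^ 2 * σ F g) * σ F h + d F * (a F ^ 2 * σ F h) * σ F g =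
        a F ^ 2 * (d F * (σ F g * σ F h) + d F * (σ F h * σ F g)) := by
      unfold d
      noncomm_ring
    rw [key]
    exact mem

lemma prod_II_II {i j : R F} (hi : i ∈ II F) (hj : j ∈ II F) : i * j + j * i ∈ EE F := by
  induction hi, hj using Submodule.span_induction₂ with
  | mem_mem w₁ w₂ h1 h2 =>
      obtain ⟨g, rfl⟩ := h1
      obtain ⟨h, rfl⟩ := h2
      exact BL g h
  | zero_left w hw => rw [zero_mul, mul_zero, add_zero]; exact zero_mem _
  | zero_right w hw => rw [zero_mul, mul_zero, zero_add]; exact zero_mem _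
  | add_left w₁ w₂ w₃ h1 h2 h3 hw1 hw2 =>
      have key : (w₁ + w₂) * w₃ + w₃ * (w₁ + w₂) =
          (w₁ * w₃ + w₃ * w₁) + (w₂ * w₃ + w₃ * w₂) := by noncomm_ring
      rw [key]; exact add_mem hw1 hw2
  | add_right w₁ w₂ w₃ h1 h2 h3 hw1 hw2 =>
      have key : w₁ * (w₂ + w₃) + (w₂ + w₃) * w₁ =
          (w₁ * w₂ + w₂ * w₁) + (w₁ * w₃ + w₃ * w₁) := by noncomm_ring
      rw [key]; exact add_mem hw1 hw2
  | smul_left t w₁ w₂ h1 h2 hw =>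
      have key : (t • w₁) * w₂ + w₂ * (t • w₁) = t • (w₁ * w₂ + w₂ * w₁) := by
        rw [smul_mul_assoc, mul_smul_comm, smul_add]
      rw [key]; exact Submodule.smul_mem _ _ hw
  | smul_right t w₁ w₂ h1 h2 hw =>
      have key : w₁ * (t • w₂) + (t • w₂) * w₁ = t • (w₁ * w₂ + w₂ * w₁) := by
        rw [smul_mul_assoc, mul_smul_comm, smul_add]
      rw [key]; exact Submodule.smul_mem _ _ hw

/-! ### The subgroup of units congruent to `1` mod `II` -/

variable (F) in
noncomputable def Hgrp : Subgroup (R F)ˣ where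
  carrier := {w | ((w : R F) + 1) ∈ II F}
  one_mem' := by
    show ((1 : (R F)ˣ) : R F) + 1 ∈ II F
    rw [Units.val_one, two_z]
    exact zero_mem _
  mul_mem' := by
    intro p q hp hq
    show ((p * q : (R F)ˣ) : R F) + 1 ∈ II F
    rw [Units.val_mul]
    have expand : ((p : R F) + 1) * ((q : R F) + 1) + (((p : R F) + 1) + ((q : R F) + 1)) =
        (p : R F) * (q : R F) + 1 + (((p : R F) + (p : R F)) +
          (((q : R F) + (q : R F)) + ((1 : R F) + (1 : R F)))) := by
      noncomm_ring
    have key : (p : R F) * (q : R F) + 1 =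
        ((p : R F) + 1) * ((q : R F) + 1) + (((p : R F) + 1) + ((q : R F) + 1)) := by
      rw [expand]
      simp only [two_z, add_zero]
    rw [key]
    exact add_mem (II_rmul hp _) (add_mem hp hq)
  inv_mem' := by
    intro p hp
    show ((p⁻¹ : (R F)ˣ) : R F) + 1 ∈ II F
    have key : ((p⁻¹ : (R F)ˣ) : R F) + 1 = (p⁻¹ : (R F)ˣ) * ((p : R F) + 1) := by
      rw [mul_add, Units.inv_mul, mul_one, add_comm]
    rw [key]
    exact II_lmul hp _

open scoped commutatorElement in
lemma comm_plus_one (p q : (R F)ˣ) : ((⁅p, q⁆ : (R F)ˣ) : R F) + 1 =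
    ((p : R F) * (q : R F) + (q : R F) * (p : R F)) * ((p⁻¹ : (R F)ˣ) * (q⁻¹ : (R F)ˣ)) := by
  rw [commutatorElement_def]
  simp only [Units.val_mul]
  have h1 : ((p : R F) * (q : R F) + (q : R F) * (p : R F)) *
      ((p⁻¹ : (R F)ˣ) * (q⁻¹ : (R F)ˣ) : R F) =
      (p : R F) * (q : R F) * (p⁻¹ : (R F)ˣ) * (q⁻¹ : (R F)ˣ) +
        (q : R F) * (((p : R F) * (p⁻¹ : (R F)ˣ)) * (q⁻¹ : (R F)ˣ)) := by
    noncomm_ring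
  rw [h1, Units.mul_inv, one_mul, Units.mul_inv]

open scoped commutatorElement in
lemma D1_le_Hgrp : derivedSeries (R F)ˣ 1 ≤ Hgrp F := by
  rw [derivedSeries_one, commutator_def]
  refine Subgroup.commutator_le.mpr ?_
  intro p _ q _
  show ((⁅p, q⁆ : (R F)ˣ) : R F) + 1 ∈ II F
  rw [comm_plus_one]
  exact II_rmul (full_comm_II _ _) _

open scoped commutatorElement in
lemma D2_central {p q : (R F)ˣ} (hp : ((p : R F) + 1) ∈ II F)
    (hq : ((q : R F) + 1) ∈ II F) : ⁅p, q⁆ ∈ Subgroup.center (R F)ˣ := by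
  have key1 : ((⁅p, q⁆ : (R F)ˣ) : R F) + 1 ∈ EE F := by
    rw [comm_plus_one]
    refine EE_rmul ?_ _
    have e1 : (p : R F) * (q : R F) + (q : R F) * (p : R F) =
        ((p : R F) + 1) * ((q : R F) + 1) + ((q : R F) + 1) * ((p : R F) + 1) := by
      noncomm_ring
      simp [two_smul, CharTwo.add_self_eq_zero]
    rw [e1]
    exact prod_II_II hp hq
  rw [Subgroup.mem_center_iff]
  intro w
  apply Units.ext
  rw [Units.val_mul, Units.val_mul]
  have hc := EE_central key1 (w : R F)
  rw [add_mul, one_mul, mul_add, mul_one] at hc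
  exact (add_right_cancel hc).symm

end QD16aux

/-- The unit group of `F_q[QD_16]` in characteristic 2 is centrally metabelian:
its second derived subgroup is contained in its center. -/
theorem unitGroup_centrallyMetabelian_QD16 (F : Type) [Field F] [Fintype F] [CharP F 2]
    (n : ℕ) (hn : 0 < n) (hq : Fintype.card F = 2 ^ n) :
    derivedSeries (MonoidAlgebra F QD16)ˣ 2 ≤ Subgroup.center (MonoidAlgebra F QD16)ˣ := by
  have h2 : derivedSeries (MonoidAlgebra F QD16)ˣ 2 =
      ⁅derivedSeries (MonoidAlgebra F QD16)ˣ 1, derivedSeries (MonoidAlgebra F QD16)ˣ 1⁆ :=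
    derivedSeries_succ _ 1
  rw [h2]
  refine Subgroup.commutator_le.mpr ?_
  intro p hp q hq'
  exact QD16aux.D2_central (QD16aux.D1_le_Hgrp hp) (QD16aux.D1_le_Hgrp hq')
end

section
/- Let F_q be a finite field of odd characteristic p with q = p^n elements. If q ≡ 1 (mod 16) or q ≡ 7 (mod 16), then the unit group U(F_q[QD_32]) of the group algebra F_q[QD_32] is isomorphic to C_{q-1}^4 × GL(2,F_q)^7, the direct product of four copies of the cyclic group of order q - 1 and seven copies of the general linear group GL(2,F_q). -/
/-- The quasidihedral group of order 32: `⟨a, x | a^16 = x^2 = 1, x a x = a^7⟩`. -/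
def QD32 : Type := PresentedGroup (qdRels 5)

instance : Group QD32 := inferInstanceAs (Group (PresentedGroup (qdRels 5)))

namespace QD32aux

def aQ : QD32 := PresentedGroup.of (rels := qdRels 5) 0
def xQ : QD32 := PresentedGroup.of (rels := qdRels 5) 1

lemma mk_rel_one {r : FreeGroup (Fin 2)} (h : r ∈ qdRels 5) :
    PresentedGroup.mk (qdRels 5) r = 1 :=
  (QuotientGroup.eq_one_iff r).mpr (Subgroup.subset_normalClosure h)

lemma rel_a16 : aQ ^ 16 = 1 := by
  have h : (FreeGroup.of (0 : Fin 2)) ^ (2 ^ (5 - 1)) ∈ qdRels 5 := Set.mem_insert _ _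
  have := mk_rel_one h
  rw [map_pow] at this
  norm_num at this
  exact this

lemma rel_x2 : xQ ^ 2 = 1 := by
  have h : (FreeGroup.of (1 : Fin 2)) ^ 2 ∈ qdRels 5 := by
    right; left; rfl
  have := mk_rel_one h
  rwa [map_pow] at this

lemma rel_xax : xQ * aQ * xQ = aQ ^ 7 := by
  have h : FreeGroup.of (1:Fin 2) * FreeGroup.of 0 * FreeGroup.of 1 *
      ((FreeGroup.of 0 ^ (2 ^ (5 - 2) - 1)):FreeGroup (Fin 2))⁻¹ ∈ qdRels 5 := by
    right; right; rfl
  have := mk_rel_one h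
  rw [map_mul, map_mul, map_mul, map_inv, map_pow, mul_inv_eq_one] at this
  norm_num at this
  exact this

lemma x_inv : xQ⁻¹ = xQ := by
  have := rel_x2
  rw [pow_two] at this
  exact inv_eq_of_mul_eq_one_right this

end QD32aux

namespace QD32aux

lemma xa : xQ * aQ = aQ ^ 7 * xQ := by
  have h := rel_xax
  have : xQ * aQ * xQ * xQ = aQ ^ 7 * xQ := by rw [h]
  rwa [mul_assoc (xQ * aQ), ← pow_two, rel_x2, mul_one] at this

lemma xa_pow (m : ℕ) : xQ * aQ ^ m = aQ ^ (7 * m) * xQ := by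
  induction m with
  | zero => simp
  | succ m ih =>
    rw [pow_succ, ← mul_assoc, ih, mul_assoc, xa, ← mul_assoc, ← pow_add]
    ring_nf

lemma a_pow_mod (m : ℕ) : aQ ^ m = aQ ^ (m % 16) := by
  conv_lhs => rw [← Nat.div_add_mod m 16]
  rw [pow_add, pow_mul, rel_a16, one_pow, one_mul]

lemma x_pow_mod (e : ℕ) : xQ ^ e = xQ ^ (e % 2) := by
  conv_lhs => rw [← Nat.div_add_mod e 2]
  rw [pow_add, pow_mul, rel_x2, one_pow, one_mul]

lemma normal_form (k : QD32) : ∃ m e : ℕ, m < 16 ∧ e < 2 ∧ k = aQ ^ m * xQ ^ e := by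
  obtain ⟨w, rfl⟩ := PresentedGroup.mk_surjective (qdRels 5) k
  induction w using FreeGroup.induction_on with
  | C1 => exact ⟨0, 0, by norm_num; rfl⟩
  | of i =>
    fin_cases i
    · exact ⟨1, 0, by norm_num, by norm_num, by show aQ = _; rw [pow_one, pow_zero, mul_one]⟩
    · exact ⟨0, 1, by norm_num, by norm_num, by show xQ = _; rw [pow_one, pow_zero, one_mul]⟩
  | inv_of i _ =>
    fin_cases i
    · refine ⟨15, 0, by norm_num, by norm_num, ?_⟩
      rw [map_inv]
      show (aQ)⁻¹ = _
      rw [pow_zero, mul_one]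
      exact inv_eq_of_mul_eq_one_right (by rw [← pow_succ']; exact rel_a16)
    · refine ⟨0, 1, by norm_num, by norm_num, ?_⟩
      rw [map_inv]
      show (xQ)⁻¹ = _
      rw [pow_zero, one_mul, pow_one, x_inv]
  | mul y z hy hz =>
    obtain ⟨m1, e1, hm1, he1, h1⟩ := hy
    obtain ⟨m2, e2, hm2, he2, h2⟩ := hz
    rw [map_mul, h1, h2]
    change ∃ m e : ℕ, m < 16 ∧ e < 2 ∧ (aQ ^ m1 * xQ ^ e1 : QD32) * (aQ ^ m2 * xQ ^ e2) = aQ ^ m * xQ ^ e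
    interval_cases e1
    · refine ⟨(m1 + m2) % 16, e2 % 2, Nat.mod_lt _ (by norm_num), Nat.mod_lt _ (by norm_num), ?_⟩
      rw [pow_zero, mul_one, ← mul_assoc, ← pow_add, ← a_pow_mod, ← x_pow_mod]
    · refine ⟨(m1 + 7 * m2) % 16, (1 + e2) % 2, Nat.mod_lt _ (by norm_num),
        Nat.mod_lt _ (by norm_num), ?_⟩
      rw [pow_one]
      calc aQ ^ m1 * xQ * (aQ ^ m2 * xQ ^ e2)
          = aQ ^ m1 * (xQ * aQ ^ m2) * xQ ^ e2 := by group
        _ = aQ ^ m1 * (aQ ^ (7 * m2) * xQ) * xQ ^ e2 := by rw [xa_pow]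
        _ = aQ ^ (m1 + 7 * m2) * xQ ^ (1 + e2) := by rw [pow_add, pow_add, pow_one]; group
        _ = _ := by rw [← a_pow_mod, ← x_pow_mod]

end QD32aux


namespace QDMat
open Matrix

variable {R : Type*} [CommRing R]

def cmp (s t : R) : Matrix (Fin 2) (Fin 2) R := !![0, -t; 1, s]
def xm (s : R) : Matrix (Fin 2) (Fin 2) R := !![1, s; 0, -1]
def scl (s : R) : Matrix (Fin 2) (Fin 2) R := !![s, 0; 0, s]

lemma xm_sq (s : R) : xm s ^ 2 = 1 := by
  rw [pow_two]
  ext i j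
  fin_cases i <;> fin_cases j <;>
    simp [xm, Matrix.mul_apply, Fin.sum_univ_two, Matrix.one_apply]

lemma xax (s t : R) : xm s * cmp s t * xm s = scl s - cmp s t := by
  ext i j
  fin_cases i <;> fin_cases j <;>
    simp [xm, cmp, scl, Matrix.mul_apply, Fin.sum_univ_two] <;> ring

lemma cmp_sq (s t : R) : cmp s t ^ 2 = scl s * cmp s t - scl t := by
  rw [pow_two]
  ext i j
  fin_cases i <;> fin_cases j <;>
    simp [cmp, scl, Matrix.mul_apply, Fin.sum_univ_two] <;> ring

lemma cmp_pow_span (s t : R) (k : ℕ) : ∃ c d : R, cmp s t ^ k = scl c + scl d * cmp s t := by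
  induction k with
  | zero =>
    refine ⟨1, 0, ?_⟩
    ext i j
    fin_cases i <;> fin_cases j <;>
      simp [cmp, scl, Matrix.mul_apply, Fin.sum_univ_two, Matrix.one_apply]
  | succ k ih =>
    obtain ⟨c, d, h⟩ := ih
    refine ⟨-(d * t), c + d * s, ?_⟩
    rw [pow_succ, h]
    ext i j
    fin_cases i <;> fin_cases j <;>
      simp [cmp, scl, Matrix.mul_apply, Fin.sum_univ_two] <;> ring

lemma trace_cmp_pow_mul_xm (s t : R) (k : ℕ) : (cmp s t ^ k * xm s).trace = 0 := by
  obtain ⟨c, d, h⟩ := cmp_pow_span s t k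
  rw [h]
  simp only [Matrix.trace_fin_two, Matrix.mul_apply, Fin.sum_univ_two]
  simp [cmp, scl, xm]

section FieldPart
variable {K : Type*} [Field K]

def Pm (l m : K) : Matrix (Fin 2) (Fin 2) K := !![-m, -l; 1, 1]
def Dm (l m : K) : Matrix (Fin 2) (Fin 2) K := !![l, 0; 0, m]

lemma det_Pm (l m : K) : (Pm l m).det = l - m := by
  simp [Pm, Matrix.det_fin_two_of]; ring

lemma isUnit_det_Pm {l m : K} (h : l ≠ m) : IsUnit (Pm l m).det := by
  rw [det_Pm]; exact (sub_ne_zero.mpr h).isUnit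

lemma cancelP {l m : K} (h : l ≠ m) {Z W : Matrix (Fin 2) (Fin 2) K}
    (hzw : Z * Pm l m = W * Pm l m) : Z = W := by
  have hP := Matrix.mul_nonsing_inv (Pm l m) (isUnit_det_Pm h)
  calc Z = Z * (Pm l m * (Pm l m)⁻¹) := by rw [hP, mul_one]
    _ = (Z * Pm l m) * (Pm l m)⁻¹ := by rw [mul_assoc]
    _ = (W * Pm l m) * (Pm l m)⁻¹ := by rw [hzw]
    _ = W * (Pm l m * (Pm l m)⁻¹) := by rw [mul_assoc]
    _ = W := by rw [hP, mul_one]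

lemma AP (l m : K) : cmp (l + m) (l * m) * Pm l m = Pm l m * Dm l m := by
  ext i j
  fin_cases i <;> fin_cases j <;>
    simp [cmp, Pm, Dm, Matrix.mul_apply, Fin.sum_univ_two] <;> ring

lemma Dm_mul (l m l' m' : K) : Dm l m * Dm l' m' = Dm (l * l') (m * m') := by
  ext i j
  fin_cases i <;> fin_cases j <;>
    simp [Dm, Matrix.mul_apply, Fin.sum_univ_two]

lemma A_pow_P (l m : K) (k : ℕ) :
    cmp (l + m) (l * m) ^ k * Pm l m = Pm l m * Dm (l ^ k) (m ^ k) := by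
  induction k with
  | zero =>
    simp only [pow_zero, one_mul]
    ext i j
    fin_cases i <;> fin_cases j <;>
      simp [Pm, Dm, Matrix.mul_apply, Fin.sum_univ_two]
  | succ k ih =>
    rw [pow_succ', mul_assoc, ih, ← mul_assoc, AP, mul_assoc, Dm_mul, pow_succ', pow_succ']

lemma A_pow16 {l m : K} (h : l ≠ m) (hl : l ^ 16 = 1) (hm : m ^ 16 = 1) :
    cmp (l + m) (l * m) ^ 16 = 1 := by
  apply cancelP h
  rw [A_pow_P, hl, hm, one_mul]
  ext i j
  fin_cases i <;> fin_cases j <;>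
    simp [Pm, Dm, Matrix.mul_apply, Fin.sum_univ_two, Matrix.one_apply]

lemma A_pow7 {l m : K} (h : l ≠ m) (h7 : l ^ 7 = m) (h7' : m ^ 7 = l) :
    cmp (l + m) (l * m) ^ 7 = scl (l + m) - cmp (l + m) (l * m) := by
  apply cancelP h
  rw [A_pow_P, h7, h7', sub_mul, AP]
  ext i j
  fin_cases i <;> fin_cases j <;>
    simp [Pm, Dm, cmp, scl, Matrix.mul_apply, Fin.sum_univ_two] <;> ring

lemma A_pow_eq_one {l m : K} (h : l ≠ m) {k : ℕ}
    (hk : cmp (l + m) (l * m) ^ k = 1) : l ^ k = 1 := by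
  have h1 : Pm l m * Dm (l ^ k) (m ^ k) = Pm l m := by rw [← A_pow_P, hk, one_mul]
  have hP := Matrix.nonsing_inv_mul (Pm l m) (isUnit_det_Pm h)
  have h2 : Dm (l ^ k) (m ^ k) = 1 := by
    calc Dm (l ^ k) (m ^ k) = ((Pm l m)⁻¹ * Pm l m) * Dm (l ^ k) (m ^ k) := by rw [hP, one_mul]
      _ = (Pm l m)⁻¹ * (Pm l m * Dm (l ^ k) (m ^ k)) := by rw [mul_assoc]
      _ = (Pm l m)⁻¹ * Pm l m := by rw [h1]
      _ = 1 := hP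
  have := congrArg (fun Z : Matrix (Fin 2) (Fin 2) K => Z 0 0) h2
  simpa [Dm, Matrix.one_apply] using this

lemma trace_A_pow {l m : K} (h : l ≠ m) (k : ℕ) :
    (cmp (l + m) (l * m) ^ k).trace = l ^ k + m ^ k := by
  have hP := Matrix.mul_nonsing_inv (Pm l m) (isUnit_det_Pm h)
  have hP' := Matrix.nonsing_inv_mul (Pm l m) (isUnit_det_Pm h)
  have h1 : cmp (l + m) (l * m) ^ k = Pm l m * Dm (l ^ k) (m ^ k) * (Pm l m)⁻¹ := by
    rw [← A_pow_P, mul_assoc, hP, mul_one]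
  rw [h1, Matrix.trace_mul_cycle, hP', one_mul]
  simp [Dm, Matrix.trace_fin_two]

end FieldPart

section Transfer
variable {S : Type*} [CommRing S] (ψ : R →+* S)

lemma map_cmp (s t : R) : ψ.mapMatrix (cmp s t) = cmp (ψ s) (ψ t) := by
  ext i j
  fin_cases i <;> fin_cases j <;> simp [cmp, RingHom.mapMatrix_apply, Matrix.map_apply]

lemma map_xm (s : R) : ψ.mapMatrix (xm s) = xm (ψ s) := by
  ext i j
  fin_cases i <;> fin_cases j <;> simp [xm, RingHom.mapMatrix_apply, Matrix.map_apply]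

lemma map_scl (s : R) : ψ.mapMatrix (scl s) = scl (ψ s) := by
  ext i j
  fin_cases i <;> fin_cases j <;> simp [scl, RingHom.mapMatrix_apply, Matrix.map_apply]

lemma map_trace (Z : Matrix (Fin 2) (Fin 2) R) : (ψ.mapMatrix Z).trace = ψ Z.trace := by
  simp [Matrix.trace_fin_two, RingHom.mapMatrix_apply, Matrix.map_apply]

lemma mapMatrix_injective (hψ : Function.Injective ψ) :
    Function.Injective (ψ.mapMatrix : Matrix (Fin 2) (Fin 2) R →+* Matrix (Fin 2) (Fin 2) S) := by
  intro Z W h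
  ext i j
  have := congrArg (fun M : Matrix (Fin 2) (Fin 2) S => M i j) h
  exact hψ this

end Transfer
end QDMat

namespace QDMain
open QDMat

variable {F K : Type*} [Field F] [Field K]

abbrev M2 (F : Type*) [Field F] := Matrix (Fin 2) (Fin 2) F

abbrev Bm (F : Type*) [Field F] : Type _ :=
  F × F × F × F × M2 F × M2 F × M2 F × M2 F × M2 F × M2 F × M2 F

def Aj (s : ℕ → F) (j : ℕ) : M2 F := cmp (s j) ((-1) ^ j)
def Xj (s : ℕ → F) (j : ℕ) : M2 F := xm (s j)

def aB (s : ℕ → F) : Bm F :=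
  (1, 1, -1, -1, Aj s 1, Aj s 2, Aj s 3, Aj s 4, Aj s 6, Aj s 9, Aj s 11)
def aBi (s : ℕ → F) : Bm F :=
  (1, 1, -1, -1, Aj s 1 ^ 15, Aj s 2 ^ 15, Aj s 3 ^ 15, Aj s 4 ^ 15, Aj s 6 ^ 15,
    Aj s 9 ^ 15, Aj s 11 ^ 15)
def xB (s : ℕ → F) : Bm F :=
  (1, -1, 1, -1, Xj s 1, Xj s 2, Xj s 3, Xj s 4, Xj s 6, Xj s 9, Xj s 11)

section WithData
variable (ψ : F →+* K) (ζ : K) (s : ℕ → F)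
variable (hζ : IsPrimitiveRoot ζ 16) (hs : ∀ j, ψ (s j) = ζ ^ j + ζ ^ (7 * j))

include hζ in
lemma zeta_ne (j : ℕ) (h6 : ¬ ((16:ℕ) ∣ 6 * j)) : ζ ^ j ≠ ζ ^ (7 * j) := by
  intro h
  have h7 : ζ ^ (7 * j) = ζ ^ (6 * j) * ζ ^ j := by rw [← pow_add]; ring_nf
  rw [h7] at h
  have hζ0 : ζ ≠ 0 := by
    intro h0
    have := hζ.pow_eq_one
    rw [h0] at this
    simp at this
  have hj0 : ζ ^ j ≠ 0 := pow_ne_zero _ hζ0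
  have h2 : ζ ^ (6 * j) * ζ ^ j = 1 * ζ ^ j := by rw [one_mul, ← h]
  exact h6 (hζ.dvd_of_pow_eq_one _ (mul_right_cancel₀ hj0 h2))

include hζ in
lemma zeta_eight : ζ ^ 8 = -1 := by
  have h2 : ζ ^ 8 * ζ ^ 8 = 1 := by
    rw [← pow_add]; exact hζ.pow_eq_one
  rcases mul_self_eq_one_iff.mp h2 with h | h
  · exact absurd (hζ.dvd_of_pow_eq_one _ h) (by norm_num)
  · exact h

include hs hζ in
lemma map_Aj (j : ℕ) :
    ψ.mapMatrix (Aj s j) = cmp (ζ ^ j + ζ ^ (7 * j)) (ζ ^ j * ζ ^ (7 * j)) := by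
  have h8 : ζ ^ j * ζ ^ (7 * j) = (-1 : K) ^ j := by
    rw [← pow_add, show j + 7 * j = 8 * j from by ring, pow_mul, zeta_eight ζ hζ]
  rw [Aj, map_cmp, hs, h8, _root_.map_pow, map_neg, _root_.map_one]

include hζ hs in
lemma Aj_pow16 (j : ℕ) (h6 : ¬ ((16:ℕ) ∣ 6 * j)) : Aj s j ^ 16 = 1 := by
  apply mapMatrix_injective ψ ψ.injective
  rw [map_pow, _root_.map_one, map_Aj ψ ζ s hζ hs,
    A_pow16 (zeta_ne ζ hζ j h6)
      (by rw [← pow_mul, mul_comm, pow_mul, hζ.pow_eq_one, one_pow])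
      (by rw [← pow_mul, show 7 * j * 16 = 16 * (7 * j) from by ring, pow_mul,
        hζ.pow_eq_one, one_pow])]

include hζ hs in
lemma Aj_pow7 (j : ℕ) (h6 : ¬ ((16:ℕ) ∣ 6 * j)) :
    Aj s j ^ 7 = scl (s j) - Aj s j := by
  apply mapMatrix_injective ψ ψ.injective
  rw [map_pow, map_sub, map_scl, map_Aj ψ ζ s hζ hs, hs,
    A_pow7 (zeta_ne ζ hζ j h6)
      (by rw [← pow_mul, mul_comm j 7])
      (by rw [← pow_mul, show 7 * j * 7 = 16 * (3 * j) + j from by ring, pow_add, pow_mul,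
        hζ.pow_eq_one, one_pow, one_mul])]

include hζ hs in
lemma Xj_Aj_Xj (j : ℕ) (h6 : ¬ ((16:ℕ) ∣ 6 * j)) :
    Xj s j * Aj s j * Xj s j = Aj s j ^ 7 := by
  rw [Aj_pow7 ψ ζ s hζ hs j h6, Xj, Aj, xax]

lemma Xj_sq (j : ℕ) : Xj s j ^ 2 = 1 := xm_sq _

include hζ hs in
lemma trace_Aj_pow (j k : ℕ) (h6 : ¬ ((16:ℕ) ∣ 6 * j)) :
    ψ ((Aj s j ^ k).trace) = ζ ^ (j * k) + ζ ^ (7 * (j * k)) := by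
  rw [← map_trace, _root_.map_pow, map_Aj ψ ζ s hζ hs,
    trace_A_pow (zeta_ne ζ hζ j h6), ← pow_mul, ← pow_mul,
    show 7 * j * k = 7 * (j * k) from by ring]

lemma trace_Aj_pow_Xj (j k : ℕ) : (Aj s j ^ k * Xj s j).trace = 0 :=
  trace_cmp_pow_mul_xm _ _ _

include hζ hs in
lemma Aj_pow_eq_one_dvd (j : ℕ) (h6 : ¬ ((16:ℕ) ∣ 6 * j)) {k : ℕ}
    (h : Aj s j ^ k = 1) : (16:ℕ) ∣ j * k := by
  have : ψ.mapMatrix (Aj s j ^ k) = 1 := by rw [h, _root_.map_one]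
  rw [map_pow, map_Aj ψ ζ s hζ hs] at this
  have h1 := A_pow_eq_one (zeta_ne ζ hζ j h6) this
  rw [← pow_mul] at h1
  exact hζ.dvd_of_pow_eq_one _ h1

end WithData
end QDMain

namespace QDMain
open QDMat QD32aux

section Rep
variable {F K : Type*} [Field F] [Field K]
variable (ψ : F →+* K) (ζ : K) (s : ℕ → F)
variable (hζ : IsPrimitiveRoot ζ 16) (hs : ∀ j, ψ (s j) = ζ ^ j + ζ ^ (7 * j))

def tfun (b : Bm F) : F :=
  b.1 + b.2.1 + b.2.2.1 + b.2.2.2.1 +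
    2 * (b.2.2.2.2.1.trace + b.2.2.2.2.2.1.trace + b.2.2.2.2.2.2.1.trace +
      b.2.2.2.2.2.2.2.1.trace + b.2.2.2.2.2.2.2.2.1.trace + b.2.2.2.2.2.2.2.2.2.1.trace +
      b.2.2.2.2.2.2.2.2.2.2.trace)

lemma tfun_add (b c : Bm F) : tfun (b + c) = tfun b + tfun c := by
  rcases b with ⟨b1, b2, b3, b4, c1, c2, c3, c4, c5, c6, c7⟩
  rcases c with ⟨d1, d2, d3, d4, e1, e2, e3, e4, e5, e6, e7⟩
  simp only [tfun, Prod.mk_add_mk, Matrix.trace_add]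
  ring

lemma tfun_smul (r : F) (b : Bm F) : tfun (r • b) = r * tfun b := by
  rcases b with ⟨b1, b2, b3, b4, c1, c2, c3, c4, c5, c6, c7⟩
  simp only [tfun, Prod.smul_mk, Matrix.trace_smul, smul_eq_mul]
  ring

def tA : Bm F →+ F := AddMonoidHom.mk' tfun tfun_add

lemma tfun_one : tfun (1 : Bm F) = 32 := by
  simp only [tfun]
  rw [show (1 : Bm F) = (1, 1, 1, 1, 1, 1, 1, 1, 1, 1, (1 : M2 F)) from rfl]
  simp [Matrix.trace_one]
  norm_num

include hζ hs in
theorem exists_rep (h32 : (32 : F) ≠ 0) :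
    Nat.card QD32 = 32 ∧ ∃ φ : MonoidAlgebra F QD32 →ₐ[F] Bm F, Function.Injective φ := by
  classical
  have h61 : ¬ ((16:ℕ) ∣ 6 * 1) := by decide
  have h62 : ¬ ((16:ℕ) ∣ 6 * 2) := by decide
  have h63 : ¬ ((16:ℕ) ∣ 6 * 3) := by decide
  have h64 : ¬ ((16:ℕ) ∣ 6 * 4) := by decide
  have h66 : ¬ ((16:ℕ) ∣ 6 * 6) := by decide
  have h69 : ¬ ((16:ℕ) ∣ 6 * 9) := by decide
  have h611 : ¬ ((16:ℕ) ∣ 6 * 11) := by decide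
  have hA16 : ∀ j, ¬ ((16:ℕ) ∣ 6 * j) → Aj s j ^ 16 = 1 := fun j hj =>
    Aj_pow16 ψ ζ s hζ hs j hj
  have hAmul : ∀ j, ¬ ((16:ℕ) ∣ 6 * j) → Aj s j * Aj s j ^ 15 = 1 := fun j hj => by
    rw [← pow_succ']; exact hA16 j hj
  have hAmul' : ∀ j, ¬ ((16:ℕ) ∣ 6 * j) → Aj s j ^ 15 * Aj s j = 1 := fun j hj => by
    rw [← pow_succ]; exact hA16 j hj
  let uA : (Bm F)ˣ :=
  { val := aB s
    inv := aBi s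
    val_inv := by
      simp only [aB, aBi, Prod.mk_mul_mk, Prod.mk_eq_one]
      refine ⟨by norm_num, by norm_num, by norm_num, by norm_num,
        hAmul 1 h61, hAmul 2 h62, hAmul 3 h63, hAmul 4 h64, hAmul 6 h66,
        hAmul 9 h69, hAmul 11 h611⟩
    inv_val := by
      simp only [aB, aBi, Prod.mk_mul_mk, Prod.mk_eq_one]
      refine ⟨by norm_num, by norm_num, by norm_num, by norm_num,
        hAmul' 1 h61, hAmul' 2 h62, hAmul' 3 h63, hAmul' 4 h64, hAmul' 6 h66,
        hAmul' 9 h69, hAmul' 11 h611⟩ }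
  have hX2 : ∀ j, Xj s j * Xj s j = 1 := fun j => by
    rw [← pow_two]; exact Xj_sq s j
  let uX : (Bm F)ˣ :=
  { val := xB s
    inv := xB s
    val_inv := by
      simp only [xB, Prod.mk_mul_mk, Prod.mk_eq_one]
      refine ⟨by norm_num, by norm_num, by norm_num, by norm_num,
        hX2 1, hX2 2, hX2 3, hX2 4, hX2 6, hX2 9, hX2 11⟩
    inv_val := by
      simp only [xB, Prod.mk_mul_mk, Prod.mk_eq_one]
      refine ⟨by norm_num, by norm_num, by norm_num, by norm_num,
        hX2 1, hX2 2, hX2 3, hX2 4, hX2 6, hX2 9, hX2 11⟩ }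
  have huA16 : uA ^ 16 = 1 := by
    apply Units.ext
    rw [Units.val_pow_eq_pow_val]
    show (aB s) ^ 16 = 1
    simp only [aB, Prod.pow_mk, Prod.mk_eq_one]
    refine ⟨by norm_num, by norm_num, by norm_num, by norm_num,
      hA16 1 h61, hA16 2 h62, hA16 3 h63, hA16 4 h64, hA16 6 h66, hA16 9 h69, hA16 11 h611⟩
  have huX2 : uX ^ 2 = 1 := by
    apply Units.ext
    rw [Units.val_pow_eq_pow_val]
    show (xB s) ^ 2 = 1
    simp only [xB, Prod.pow_mk, Prod.mk_eq_one]
    refine ⟨by norm_num, by norm_num, by norm_num, by norm_num,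
      Xj_sq s 1, Xj_sq s 2, Xj_sq s 3, Xj_sq s 4, Xj_sq s 6, Xj_sq s 9, Xj_sq s 11⟩
  have hXAX : uX * uA * uX = uA ^ 7 := by
    apply Units.ext
    rw [Units.val_pow_eq_pow_val]
    show (xB s) * (aB s) * (xB s) = (aB s) ^ 7
    simp only [xB, aB, Prod.mk_mul_mk, Prod.pow_mk, Prod.ext_iff]
    refine ⟨by norm_num, by norm_num, by norm_num, by norm_num,
      Xj_Aj_Xj ψ ζ s hζ hs 1 h61, Xj_Aj_Xj ψ ζ s hζ hs 2 h62, Xj_Aj_Xj ψ ζ s hζ hs 3 h63,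
      Xj_Aj_Xj ψ ζ s hζ hs 4 h64, Xj_Aj_Xj ψ ζ s hζ hs 6 h66, Xj_Aj_Xj ψ ζ s hζ hs 9 h69,
      Xj_Aj_Xj ψ ζ s hζ hs 11 h611⟩
  let f : Fin 2 → (Bm F)ˣ := ![uA, uX]
  have hf0 : f 0 = uA := rfl
  have hf1 : f 1 = uX := rfl
  have hrels : ∀ r ∈ qdRels 5, FreeGroup.lift f r = 1 := by
    intro r hr
    simp only [qdRels, Set.mem_insert_iff, Set.mem_singleton_iff] at hr
    rcases hr with rfl | rfl | rfl
    · rw [map_pow, FreeGroup.lift_apply_of, hf0]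
      exact huA16
    · rw [map_pow, FreeGroup.lift_apply_of, hf1]
      exact huX2
    · rw [map_mul, map_mul, map_mul, map_inv, map_pow, FreeGroup.lift_apply_of,
        FreeGroup.lift_apply_of, hf0, hf1, mul_inv_eq_one]
      exact hXAX
  let ρ : QD32 →* (Bm F)ˣ := PresentedGroup.toGroup hrels
  have hρa : ρ aQ = uA := PresentedGroup.toGroup.of hrels
  have hρx : ρ xQ = uX := PresentedGroup.toGroup.of hrels
  have hval : ∀ m e : ℕ, ((ρ (aQ ^ m * xQ ^ e) : (Bm F)ˣ) : Bm F) = aB s ^ m * xB s ^ e := by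
    intro m e
    rw [map_mul, map_pow, map_pow, hρa, hρx, Units.val_mul,
      Units.val_pow_eq_pow_val, Units.val_pow_eq_pow_val]
  have htf_e1 : ∀ m : ℕ, tfun (aB s ^ m * xB s ^ 1) = 0 := by
    intro m
    rw [pow_one]
    simp only [aB, xB, Prod.pow_mk, Prod.mk_mul_mk, tfun]
    rw [trace_Aj_pow_Xj s 1 m, trace_Aj_pow_Xj s 2 m, trace_Aj_pow_Xj s 3 m,
      trace_Aj_pow_Xj s 4 m, trace_Aj_pow_Xj s 6 m, trace_Aj_pow_Xj s 9 m,
      trace_Aj_pow_Xj s 11 m]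
    simp
  have htf_e0 : ∀ m : ℕ, ¬ ((16:ℕ) ∣ m) → tfun (aB s ^ m * xB s ^ 0) = 0 := by
    intro m hm0
    rw [pow_zero, mul_one]
    simp only [aB, Prod.pow_mk, tfun]
    apply ψ.injective
    rw [map_zero]
    simp only [map_add, map_mul, _root_.map_pow, map_neg, _root_.map_one, map_ofNat]
    rw [trace_Aj_pow ψ ζ s hζ hs 1 m h61, trace_Aj_pow ψ ζ s hζ hs 2 m h62,
      trace_Aj_pow ψ ζ s hζ hs 3 m h63, trace_Aj_pow ψ ζ s hζ hs 4 m h64,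
      trace_Aj_pow ψ ζ s hζ hs 6 m h66, trace_Aj_pow ψ ζ s hζ hs 9 m h69,
      trace_Aj_pow ψ ζ s hζ hs 11 m h611]
    have hjm : ∀ j : ℕ, ζ ^ (j * m) = (ζ ^ m) ^ j := fun j => by
      rw [← pow_mul, mul_comm]
    rw [show 7 * (1 * m) = 7 * m from by ring, show 7 * (2 * m) = 14 * m from by ring,
      show 7 * (3 * m) = 21 * m from by ring, show 7 * (4 * m) = 28 * m from by ring,
      show 7 * (6 * m) = 42 * m from by ring, show 7 * (9 * m) = 63 * m from by ring,
      show 7 * (11 * m) = 77 * m from by ring]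
    rw [hjm 1, hjm 2, hjm 3, hjm 4, hjm 6, hjm 9, hjm 11, hjm 7, hjm 14, hjm 21,
      hjm 28, hjm 42, hjm 63, hjm 77]
    set w := ζ ^ m with hw
    have hw16 : w ^ 16 = 1 := by
      rw [hw, ← pow_mul, mul_comm, pow_mul, hζ.pow_eq_one, one_pow]
    have hwne : w ≠ 1 := fun h => hm0 (hζ.dvd_of_pow_eq_one m h)
    have hred : ∀ a b : ℕ, w ^ (16 * a + b) = w ^ b := fun a b => by
      rw [pow_add, pow_mul, hw16, one_pow, one_mul]
    rw [show (21:ℕ) = 16 * 1 + 5 from rfl, hred, show (28:ℕ) = 16 * 1 + 12 from rfl, hred,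
      show (42:ℕ) = 16 * 2 + 10 from rfl, hred, show (63:ℕ) = 16 * 3 + 15 from rfl, hred,
      show (77:ℕ) = 16 * 4 + 13 from rfl, hred]
    have hneg : (-1 : K) ^ m = w ^ 8 := by
      rw [hw, ← pow_mul, mul_comm m 8, pow_mul, zeta_eight ζ hζ]
    rw [hneg]
    have hgeom : ∑ t ∈ Finset.range 16, w ^ t = 0 := by
      rw [geom_sum_eq hwne, hw16]
      simp
    have hexp : 1 + w + w^2 + w^3 + w^4 + w^5 + w^6 + w^7 + w^8 + w^9 + w^10 + w^11
        + w^12 + w^13 + w^14 + w^15 = 0 := by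
      rw [← hgeom]
      simp only [Finset.sum_range_succ, Finset.sum_range_zero]
      ring
    linear_combination 2 * hexp
  have htfΘ : ∀ k : QD32, k ≠ 1 → tfun ((ρ k : (Bm F)ˣ) : Bm F) = 0 := by
    intro k hk
    obtain ⟨m, e, hm, he, rfl⟩ := normal_form k
    rw [hval]
    interval_cases e
    · rcases Nat.eq_zero_or_pos m with rfl | hm0
      · exact absurd (by simp) hk
      · exact htf_e0 m (by omega)
    · exact htf_e1 m
  have hΘone : tfun (((1 : (Bm F)ˣ) : Bm F)) = 32 := by
    rw [Units.val_one]; exact tfun_one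
  let ρ' : QD32 →* Bm F := (Units.coeHom (Bm F)).comp ρ
  have hρ' : ∀ h : QD32, ρ' h = ((ρ h : (Bm F)ˣ) : Bm F) := fun h => rfl
  have hker : ∀ c : MonoidAlgebra F QD32,
      MonoidAlgebra.lift F (Bm F) QD32 ρ' c = 0 → c = 0 := by
    intro c hc
    ext g
    have h0 : tA ((((ρ g⁻¹) : (Bm F)ˣ) : Bm F) * (MonoidAlgebra.lift F (Bm F) QD32 ρ' c)) = 0 := by
      rw [hc, mul_zero, map_zero]
    rw [MonoidAlgebra.lift_apply, Finsupp.mul_sum, map_finsuppSum] at h0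
    have hterm : ∀ h : QD32, ∀ b : F,
        tA ((((ρ g⁻¹) : (Bm F)ˣ) : Bm F) * (b • ρ' h)) =
          (if h = g then b * 32 else 0) := by
      intro h b
      rw [mul_smul_comm]
      show tfun (b • ((((ρ g⁻¹) : (Bm F)ˣ) : Bm F) * ρ' h)) = _
      rw [tfun_smul]
      have hmv : (((ρ g⁻¹ : (Bm F)ˣ)) : Bm F) * ρ' h = ((ρ (g⁻¹ * h) : (Bm F)ˣ) : Bm F) := by
        rw [hρ', map_mul, Units.val_mul]
      rw [hmv]
      by_cases hgh : h = g
      · subst hgh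
        rw [if_pos rfl, inv_mul_cancel, map_one, hΘone]
      · rw [if_neg hgh, htfΘ (g⁻¹ * h) (fun h1 => hgh (inv_mul_eq_one.mp h1).symm), mul_zero]
    rw [Finsupp.sum_congr (g2 := fun h b => if h = g then b * 32 else 0)
      (fun h _ => hterm h (c.coeff h))] at h0
    rw [Finsupp.sum_ite_eq' c.coeff g (fun _ b => b * 32)] at h0
    by_cases hg : g ∈ c.coeff.support
    · rw [if_pos hg] at h0
      rcases mul_eq_zero.mp h0 with h' | h'
      · simpa using h'
      · exact absurd h' h32
    · simpa using Finsupp.notMem_support_iff.mp hg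
  have hinj : Function.Injective (MonoidAlgebra.lift F (Bm F) QD32 ρ') := by
    intro c1 c2 h12
    have h3 : (MonoidAlgebra.lift F (Bm F) QD32 ρ') (c1 - c2) = 0 := by
      rw [map_sub, h12, sub_self]
    exact sub_eq_zero.mp (hker _ h3)
  -- cardinality of QD32
  have hA16' : Aj s 1 ^ 16 = 1 := hA16 1 h61
  have hXX : Xj s 1 * Xj s 1 = 1 := hX2 1
  have hXAX1 : Xj s 1 * Aj s 1 * Xj s 1 = Aj s 1 ^ 7 := Xj_Aj_Xj ψ ζ s hζ hs 1 h61
  have hdvd : ∀ k : ℕ, Aj s 1 ^ k = 1 → (16:ℕ) ∣ k := by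
    intro k hk
    have := Aj_pow_eq_one_dvd ψ ζ s hζ hs 1 h61 hk
    simpa using this
  have noX : ∀ k : ℕ, Xj s 1 ≠ Aj s 1 ^ k := by
    intro k hXk
    have h2k : Aj s 1 ^ (2 * k) = 1 := by
      rw [two_mul, pow_add, ← hXk]; exact hXX
    have h2k1 : Aj s 1 ^ (2 * k + 1) = Aj s 1 ^ 7 := by
      rw [← hXAX1, hXk, ← pow_succ, ← pow_add]
      congr 1
      omega
    have h6eq : Aj s 1 ^ 6 = 1 := by
      have e1 : Aj s 1 ^ (2 * k + 1) * Aj s 1 ^ 15 = Aj s 1 ^ 7 * Aj s 1 ^ 15 := by rw [h2k1]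
      rw [← pow_add, ← pow_add, show 2 * k + 1 + 15 = 2 * k + 16 from by ring,
        pow_add, h2k, one_mul, hA16', show (7:ℕ) + 15 = 6 + 16 from by norm_num,
        pow_add, hA16', mul_one] at e1
      exact e1.symm
    have := hdvd 6 h6eq
    norm_num at this
  have hAinj : ∀ a b : ℕ, a < 16 → b < 16 → Aj s 1 ^ a = Aj s 1 ^ b → a = b := by
    intro a b ha hb hab
    have h1 : Aj s 1 ^ (16 - a + b) = 1 := by
      rw [pow_add, ← hab, ← pow_add, show 16 - a + a = 16 from by omega]
      exact hA16'
    obtain ⟨t, ht⟩ := hdvd _ h1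
    omega
  have hNF : ∀ a b u v : ℕ, a < 16 → b < 16 → u < 2 → v < 2 →
      Aj s 1 ^ a * Xj s 1 ^ u = Aj s 1 ^ b * Xj s 1 ^ v → a = b ∧ u = v := by
    intro a b u v ha hb hu hv h
    have key : ∀ a' b' : ℕ, a' < 16 → b' < 16 →
        Aj s 1 ^ a' = Aj s 1 ^ b' * Xj s 1 → False := by
      intro a' b' _ _ h'
      apply noX (16 - b' + a')
      have h2 : Aj s 1 ^ (16 - b' + a') = Xj s 1 := by
        rw [pow_add, h', ← mul_assoc, ← pow_add, show 16 - b' + b' = 16 from by omega,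
          hA16', one_mul]
      exact h2.symm
    interval_cases u <;> interval_cases v <;>
      simp only [pow_zero, pow_one, mul_one] at h
    · exact ⟨hAinj a b ha hb h, rfl⟩
    · exact absurd h (fun h' => key a b ha hb h')
    · exact absurd h.symm (fun h' => key b a hb ha h')
    · have h' : Aj s 1 ^ a = Aj s 1 ^ b := by
        have h2 := congrArg (fun Z => Z * Xj s 1) h
        simp only [mul_assoc, hXX, mul_one] at h2
        exact h2
      exact ⟨hAinj a b ha hb h', rfl⟩
  let πc : Bm F →* M2 F :=
    { toFun := fun b => b.2.2.2.2.1
      map_one' := rfl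
      map_mul' := fun _ _ => rfl }
  let τ : QD32 →* M2 F := πc.comp ((Units.coeHom (Bm F)).comp ρ)
  have hτ : ∀ m e : ℕ, τ (aQ ^ m * xQ ^ e) = Aj s 1 ^ m * Xj s 1 ^ e := by
    intro m e
    have h3 : τ (aQ ^ m * xQ ^ e) = πc ((ρ (aQ ^ m * xQ ^ e) : (Bm F)ˣ) : Bm F) := rfl
    rw [h3, hval m e]
    simp only [aB, xB, Prod.pow_mk, Prod.mk_mul_mk]
    rfl
  let nf : Fin 16 × Fin 2 → QD32 := fun me => aQ ^ (me.1 : ℕ) * xQ ^ (me.2 : ℕ)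
  have hnf_bij : Function.Bijective nf := by
    constructor
    · rintro ⟨m1, e1⟩ ⟨m2, e2⟩ hnf
      have h2 : Aj s 1 ^ (m1 : ℕ) * Xj s 1 ^ (e1 : ℕ) =
          Aj s 1 ^ (m2 : ℕ) * Xj s 1 ^ (e2 : ℕ) := by
        rw [← hτ, ← hτ]
        exact congrArg τ hnf
      obtain ⟨hm, he⟩ := hNF _ _ _ _ m1.2 m2.2 e1.2 e2.2 h2
      exact Prod.ext (Fin.ext hm) (Fin.ext he)
    · intro k
      obtain ⟨m, e, hm, he, rfl⟩ := normal_form k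
      exact ⟨(⟨m, hm⟩, ⟨e, he⟩), rfl⟩
  refine ⟨?_, MonoidAlgebra.lift F (Bm F) QD32 ρ', hinj⟩
  rw [← Nat.card_congr (Equiv.ofBijective nf hnf_bij)]
  simp [Nat.card_eq_fintype_card]

end Rep
end QDMain

lemma exists_preimage_of_pow_card {F K : Type*} [Field F] [Fintype F] [Field K]
    (ψ : F →+* K) (z : K) (hz : z ^ (Fintype.card F) = z) : ∃ f : F, ψ f = z := by
  classical
  by_contra hc
  push_neg at hc
  set q := Fintype.card F with hq
  have hq2 : 2 ≤ q := Fintype.one_lt_card_iff_nontrivial.mpr inferInstance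
  set P : Polynomial K := Polynomial.X ^ q - Polynomial.X with hP
  have hdeg : P.natDegree = q := by
    rw [hP, Polynomial.natDegree_sub_eq_left_of_natDegree_lt, Polynomial.natDegree_X_pow]
    rw [Polynomial.natDegree_X_pow, Polynomial.natDegree_X]
    omega
  have hP0 : P ≠ 0 := fun h => by rw [h, Polynomial.natDegree_zero] at hdeg; omega
  set T : Finset K := insert z (Finset.univ.image ψ) with hT
  have hTcard : T.card = q + 1 := by
    rw [hT, Finset.card_insert_of_notMem, Finset.card_image_of_injective _ ψ.injective,
      Finset.card_univ]
    intro hmem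
    obtain ⟨f, _, hf⟩ := Finset.mem_image.mp hmem
    exact hc f hf
  have hTroots : T ⊆ P.roots.toFinset := by
    intro y hy
    rw [Multiset.mem_toFinset, Polynomial.mem_roots hP0]
    rcases Finset.mem_insert.mp hy with rfl | hy
    · simp [Polynomial.IsRoot, hP, hz]
    · obtain ⟨f, _, rfl⟩ := Finset.mem_image.mp hy
      have : (ψ f) ^ q = ψ f := by rw [← map_pow, hq, FiniteField.pow_card]
      simp [Polynomial.IsRoot, hP, this]
  have hle := (Finset.card_le_card hTroots).trans
    ((Multiset.toFinset_card_le _).trans (Polynomial.card_roots' P))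
  omega

theorem unitGroup_QD32_one_seven (F : Type) [Field F] [Fintype F]
    (p n : ℕ) [Fact p.Prime] (hp : Odd p) [CharP F p]
    (hn : 0 < n) (hq : Fintype.card F = p ^ n)
    (h16 : Fintype.card F % 16 = 1 ∨ Fintype.card F % 16 = 7) :
    Nonempty ((MonoidAlgebra F QD32)ˣ ≃*
      (Multiplicative (ZMod (Fintype.card F - 1)) ×
       Multiplicative (ZMod (Fintype.card F - 1)) ×
       Multiplicative (ZMod (Fintype.card F - 1)) ×
       Multiplicative (ZMod (Fintype.card F - 1)) ×
       Matrix.GeneralLinearGroup (Fin 2) F ×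
       Matrix.GeneralLinearGroup (Fin 2) F ×
       Matrix.GeneralLinearGroup (Fin 2) F ×
       Matrix.GeneralLinearGroup (Fin 2) F ×
       Matrix.GeneralLinearGroup (Fin 2) F ×
       Matrix.GeneralLinearGroup (Fin 2) F ×
       Matrix.GeneralLinearGroup (Fin 2) F)) := by
  classical
  let K := AlgebraicClosure F
  let ψ : F →+* K := algebraMap F K
  haveI : CharP K p := charP_of_injective_algebraMap ψ.injective p
  have hp2 : p ≠ 2 := by
    rintro rfl
    exact (by norm_num : ¬ Odd 2) hp
  have hprime : p.Prime := Fact.out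
  have hpd16 : ¬ ((p:ℕ) ∣ 16) := by
    intro hd
    have h2 : p ∣ 2 := hprime.dvd_of_dvd_pow (show p ∣ 2 ^ 4 by norm_num at hd ⊢; exact hd)
    exact hp2 ((Nat.prime_dvd_prime_iff_eq hprime Nat.prime_two).mp h2)
  haveI : NeZero ((16 : ℕ) : K) := ⟨by
    rw [Ne, CharP.cast_eq_zero_iff K p]
    exact hpd16⟩
  obtain ⟨ζ, hζ⟩ := HasEnoughRootsOfUnity.exists_primitiveRoot K 16
  have hzq : ∀ i : ℕ, (ζ ^ i) ^ (Fintype.card F) = ζ ^ (i * (Fintype.card F % 16)) := by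
    intro i
    conv_lhs => rw [← Nat.div_add_mod (Fintype.card F) 16]
    rw [← pow_mul, Nat.mul_add,
      show i * (16 * (Fintype.card F / 16)) = 16 * (i * (Fintype.card F / 16)) from by ring,
      pow_add, pow_mul, hζ.pow_eq_one, one_pow, one_mul]
  have hfix : ∀ j : ℕ, ∃ f : F, ψ f = ζ ^ j + ζ ^ (7 * j) := by
    intro j
    apply exists_preimage_of_pow_card
    have hadd : (ζ ^ j + ζ ^ (7 * j)) ^ (Fintype.card F)
        = (ζ ^ j) ^ (Fintype.card F) + (ζ ^ (7 * j)) ^ (Fintype.card F) := by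
      rw [hq]
      exact add_pow_char_pow (ζ ^ j) (ζ ^ (7 * j)) p n
    rw [hadd, hzq j, hzq (7 * j)]
    rcases h16 with hr | hr
    · rw [hr, mul_one, mul_one]
    · rw [hr]
      have h1 : ζ ^ (7 * j * 7) = ζ ^ j := by
        rw [show 7 * j * 7 = 16 * (3 * j) + j from by ring, pow_add, pow_mul,
          hζ.pow_eq_one, one_pow, one_mul]
      rw [h1, mul_comm j 7, add_comm]
  choose s hs using hfix
  have h32 : (32 : F) ≠ 0 := by
    have h32' : ((32:ℕ) : F) ≠ 0 := by
      rw [Ne, CharP.cast_eq_zero_iff F p]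
      intro hd
      have h2 : p ∣ 2 := hprime.dvd_of_dvd_pow (show p ∣ 2 ^ 5 by norm_num at hd ⊢; exact hd)
      exact hp2 ((Nat.prime_dvd_prime_iff_eq hprime Nat.prime_two).mp h2)
    simpa using h32'
  obtain ⟨hcard, φ, hφinj⟩ := QDMain.exists_rep ψ ζ s hζ hs h32
  haveI : Finite QD32 := Nat.finite_of_card_ne_zero (by rw [hcard]; norm_num)
  haveI : Fintype QD32 := Fintype.ofFinite _
  have hM2card : Nat.card (QDMain.M2 F) = Fintype.card F ^ 4 := by
    rw [← Nat.card_congr (Matrix.of (m := Fin 2) (n := Fin 2) (α := F))]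
    rw [Nat.card_fun, Nat.card_fun]
    simp [Nat.card_eq_fintype_card]
    ring
  have hBcard : Nat.card (QDMain.Bm F) = Fintype.card F ^ 32 := by
    simp only [QDMain.Bm, Nat.card_prod, hM2card]
    rw [Nat.card_eq_fintype_card (α := F)]
    ring
  have hMAcard : Nat.card (MonoidAlgebra F QD32) = Fintype.card F ^ 32 := by
    have h' : Nat.card (QD32 →₀ F) = Fintype.card F ^ 32 := by
      rw [Nat.card_congr Finsupp.equivFunOnFinite, Nat.card_fun, hcard,
        Nat.card_eq_fintype_card]
    exact (Nat.card_congr MonoidAlgebra.coeffEquiv).trans h'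
  have hbij : Function.Bijective φ :=
    (Nat.bijective_iff_injective_and_card φ).mpr ⟨hφinj, by rw [hMAcard, hBcard]⟩
  let e1 : (MonoidAlgebra F QD32)ˣ ≃* (QDMain.Bm F)ˣ :=
    Units.mapEquiv (MulEquiv.ofBijective φ hbij)
  have hcu : Nat.card Fˣ = Fintype.card F - 1 := by
    rw [Nat.card_eq_fintype_card, Fintype.card_units]
  let uF : Fˣ ≃* Multiplicative (ZMod (Fintype.card F - 1)) :=
    hcu ▸ (zmodCyclicMulEquiv inferInstance).symm
  let glE : (QDMain.M2 F)ˣ ≃* Matrix.GeneralLinearGroup (Fin 2) F := MulEquiv.refl _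
  exact ⟨e1.trans (MulEquiv.prodUnits.trans (uF.prodCongr (MulEquiv.prodUnits.trans (uF.prodCongr
    (MulEquiv.prodUnits.trans (uF.prodCongr (MulEquiv.prodUnits.trans (uF.prodCongr
    (MulEquiv.prodUnits.trans (glE.prodCongr (MulEquiv.prodUnits.trans (glE.prodCongr
    (MulEquiv.prodUnits.trans (glE.prodCongr (MulEquiv.prodUnits.trans (glE.prodCongr
    (MulEquiv.prodUnits.trans (glE.prodCongr (MulEquiv.prodUnits.trans (glE.prodCongr
    glE))))))))))))))))))))⟩
end
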